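/- arXiv:1704.08344 — 5 statements merged into one kernel-verified Lean document; each statement's English description precedes it below -/
import Mathlib

section
/- Let $\Field$ be a field and $R$ a commutative ring. Define $\St_{\GL_2}(\Field;R)$ to be the kernel of the augmentation map from the free $R$-module on the set $\mathbb{P}^1(\Field)$ (the projective line over $\Field$, viewed as a discrete set) to $R$. Then the coinvariants of $\St_{\GL_2}(\Field;R)$ under the natural action of $\SL_2(\Field)$ vanish: $(\St_{\GL_2}(\Field;R))_{\SL_2(\Field)} = 0$. -/
open Projectivization
open scoped LinearAlgebra.Projectivization

/-- The action of `g ∈ SL₂(F)` on the projective line `ℙ¹(F)` (the set of lines in `F²`). -/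
noncomputable def pact {F : Type*} [Field F] (g : Matrix.SpecialLinearGroup (Fin 2) F) :
    ℙ F (Fin 2 → F) → ℙ F (Fin 2 → F) :=
  Projectivization.map ((Matrix.SpecialLinearGroup.toLin' g).toLinearMap : (Fin 2 → F) →ₗ[F] (Fin 2 → F))
    (Matrix.SpecialLinearGroup.toLin' g).injective

/-- The augmentation map `R[ℙ¹(F)] → R`, whose kernel is the Steinberg module
`St_{GL₂}(F;R) = H̃₀(ℙ¹(F);R)`. -/
noncomputable def aug (F R : Type*) [Field F] [CommRing R] :
    (ℙ F (Fin 2 → F) →₀ R) →ₗ[R] R :=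
  Finsupp.linearCombination R (fun _ => (1 : R))

open scoped Matrix in
/-- `SL₂(F)` acts 2-transitively on `ℙ¹(F)`. -/
lemma two_trans {F : Type*} [Field F] (p q p' q' : ℙ F (Fin 2 → F)) (hpq : p ≠ q)
    (h' : p' ≠ q') : ∃ g : Matrix.SpecialLinearGroup (Fin 2) F,
      pact g p = p' ∧ pact g q = q' := by
  set u := p.rep with hu
  set v := q.rep with hv
  set u' := p'.rep with hu'
  set v' := q'.rep with hv'
  have hind : LinearIndependent F ![u, v] := by
    have := (independent_pair_iff_ne p q).2 hpq
    rw [independent_iff] at this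
    convert this using 1
    ext i; fin_cases i <;> rfl
    rfl
  have hind' : LinearIndependent F ![u', v'] := by
    have := (independent_pair_iff_ne p' q').2 h'
    rw [independent_iff] at this
    convert this using 1
    ext i; fin_cases i <;> rfl
    rfl
  set A : Matrix (Fin 2) (Fin 2) F := (Matrix.of ![u, v])ᵀ with hA
  set B₀ : Matrix (Fin 2) (Fin 2) F := (Matrix.of ![u', v'])ᵀ with hB
  have hAu : IsUnit A := by
    rw [← Matrix.linearIndependent_cols_iff_isUnit]
    convert hind using 1; rfl
  have hBu : IsUnit B₀ := by
    rw [← Matrix.linearIndependent_cols_iff_isUnit]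
    convert hind' using 1; rfl
  have hAdet : A.det ≠ 0 := ((Matrix.isUnit_iff_isUnit_det A).1 hAu).ne_zero
  have hBdet : B₀.det ≠ 0 := ((Matrix.isUnit_iff_isUnit_det B₀).1 hBu).ne_zero
  set c : F := A.det * B₀.det⁻¹ with hc
  have hcne : c ≠ 0 := mul_ne_zero hAdet (inv_ne_zero hBdet)
  set B : Matrix (Fin 2) (Fin 2) F := (Matrix.of ![u', c • v'])ᵀ with hBB
  have hdetB : B.det = c * B₀.det := by
    rw [hBB, hB, Matrix.det_transpose, Matrix.det_transpose]
    simp [Matrix.det_fin_two]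
    ring
  have hdetB' : B.det = A.det := by
    rw [hdetB, hc, mul_assoc, inv_mul_cancel₀ hBdet, mul_one]
  set G : Matrix (Fin 2) (Fin 2) F := B * A⁻¹ with hG
  have hGdet : G.det = 1 := by
    rw [hG, Matrix.det_mul, hdetB', Matrix.det_nonsing_inv, Ring.inverse_eq_inv,
      mul_inv_cancel₀ hAdet]
  refine ⟨⟨G, hGdet⟩, ?_, ?_⟩
  · have h1 : G.mulVec u = u' := by
      have : u = A.mulVec (Pi.single 0 1) := by
        rw [Matrix.mulVec_single_one, hA]; rfl
      rw [hG, this, Matrix.mulVec_mulVec, Matrix.mul_assoc,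
        Matrix.nonsing_inv_mul A (Ne.isUnit hAdet), Matrix.mul_one,
        Matrix.mulVec_single_one, hBB]
      rfl
    rw [← mk_rep p]
    show Projectivization.map _ _ (mk F u p.rep_nonzero) = p'
    rw [Projectivization.map_mk]
    have : (Matrix.SpecialLinearGroup.toLin' (⟨G, hGdet⟩ : Matrix.SpecialLinearGroup (Fin 2) F)).toLinearMap u = u' := by
      show Matrix.toLin' G u = u'
      rw [Matrix.toLin'_apply]; exact h1
    rw [← mk_rep p']
    exact mk_eq_mk_iff' F _ _ _ _ |>.2 ⟨1, by simp [this, hu']⟩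
  · have h1 : G.mulVec v = c • v' := by
      have : v = A.mulVec (Pi.single 1 1) := by
        rw [Matrix.mulVec_single_one, hA]; rfl
      rw [hG, this, Matrix.mulVec_mulVec, Matrix.mul_assoc,
        Matrix.nonsing_inv_mul A (Ne.isUnit hAdet), Matrix.mul_one,
        Matrix.mulVec_single_one, hBB]
      rfl
    rw [← mk_rep q]
    show Projectivization.map _ _ (mk F v q.rep_nonzero) = q'
    rw [Projectivization.map_mk]
    have h2 : (Matrix.SpecialLinearGroup.toLin' (⟨G, hGdet⟩ : Matrix.SpecialLinearGroup (Fin 2) F)).toLinearMap v = c • v' := by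
      show Matrix.toLin' G v = c • v'
      rw [Matrix.toLin'_apply]; exact h1
    rw [← mk_rep q']
    exact mk_eq_mk_iff' F _ _ _ _ |>.2 ⟨c, by simp [h2, hv']⟩

/-- `ℙ¹(F)` has at least three points: given any two points, there is a third. -/
lemma exists_third {F : Type*} [Field F] (p q : ℙ F (Fin 2 → F)) :
    ∃ r : ℙ F (Fin 2 → F), r ≠ p ∧ r ≠ q := by
  have h10 : (![1, 0] : Fin 2 → F) ≠ 0 := by intro h; simpa using congrFun h 0
  have h01 : (![0, 1] : Fin 2 → F) ≠ 0 := by intro h; simpa using congrFun h 1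
  have h11 : (![1, 1] : Fin 2 → F) ≠ 0 := by intro h; simpa using congrFun h 0
  set a : ℙ F (Fin 2 → F) := mk F ![1, 0] h10 with ha
  set b : ℙ F (Fin 2 → F) := mk F ![0, 1] h01 with hb
  set c : ℙ F (Fin 2 → F) := mk F ![1, 1] h11 with hcc
  have hab : a ≠ b := by
    rw [ha, hb, Ne, mk_eq_mk_iff']
    rintro ⟨t, ht⟩
    simpa using congrFun ht 0
  have hac : a ≠ c := by
    rw [ha, hcc, Ne, mk_eq_mk_iff']
    rintro ⟨t, ht⟩
    have h0 := congrFun ht 0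
    have h1 := congrFun ht 1
    simp at h0 h1
    exact one_ne_zero (h0 ▸ h1)
  have hbc : b ≠ c := by
    rw [hb, hcc, Ne, mk_eq_mk_iff']
    rintro ⟨t, ht⟩
    have h0 := congrFun ht 0
    have h1 := congrFun ht 1
    simp at h0 h1
    exact one_ne_zero (h1 ▸ h0)
  by_contra hcon
  push_neg at hcon
  have ka : a = p ∨ a = q := or_iff_not_imp_left.2 (hcon a)
  have kb : b = p ∨ b = q := or_iff_not_imp_left.2 (hcon b)
  have kc : c = p ∨ c = q := or_iff_not_imp_left.2 (hcon c)
  rcases ka with h1 | h1 <;> rcases kb with h2 | h2 <;> rcases kc with h3 | h3 <;>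
    first
      | exact hab (h1.trans h2.symm)
      | exact hac (h1.trans h3.symm)
      | exact hbc (h2.trans h3.symm)

/-- The `SL₂(F)`-coinvariants of the Steinberg module `St_{GL₂}(F;R)` vanish:
every element of the kernel of the augmentation lies in the `R`-submodule generated by
the elements `g • z - z`. -/
theorem steinberg_gl2_coinvariants_vanish (F R : Type*) [Field F] [CommRing R]
    (x : ℙ F (Fin 2 → F) →₀ R) (hx : x ∈ LinearMap.ker (aug F R)) :
    x ∈ Submodule.span R
      {y : ℙ F (Fin 2 → F) →₀ R | ∃ (g : Matrix.SpecialLinearGroup (Fin 2) F)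
        (z : ℙ F (Fin 2 → F) →₀ R), z ∈ LinearMap.ker (aug F R) ∧
          y = Finsupp.mapDomain (pact g) z - z} := by
  set S := Submodule.span R
      {y : ℙ F (Fin 2 → F) →₀ R | ∃ (g : Matrix.SpecialLinearGroup (Fin 2) F)
        (z : ℙ F (Fin 2 → F) →₀ R), z ∈ LinearMap.ker (aug F R) ∧
          y = Finsupp.mapDomain (pact g) z - z} with hS
  have key : ∀ p q : ℙ F (Fin 2 → F),
      Finsupp.single p (1 : R) - Finsupp.single q 1 ∈ S := by
    intro p q
    by_cases hpq : p = q
    · rw [hpq, sub_self]; exact S.zero_mem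
    · obtain ⟨r, hrp, hrq⟩ := exists_third p q
      obtain ⟨g, hg1, hg2⟩ := two_trans p q p r hpq (Ne.symm hrp)
      obtain ⟨h, hh1, hh2⟩ := two_trans p q r q hpq hrq
      set z : ℙ F (Fin 2 → F) →₀ R := Finsupp.single p 1 - Finsupp.single q 1 with hz
      have hzker : z ∈ LinearMap.ker (aug F R) := by
        rw [LinearMap.mem_ker, hz, map_sub]
        simp [aug]
      have hmg : Finsupp.mapDomain (pact g) z = Finsupp.single p 1 - Finsupp.single r 1 := by
        have e : Finsupp.mapDomain (pact g) z = Finsupp.lmapDomain R R (pact g) z := rfl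
        rw [e, hz, map_sub]
        simp only [Finsupp.lmapDomain_apply, Finsupp.mapDomain_single, hg1, hg2]
      have hmh : Finsupp.mapDomain (pact h) z = Finsupp.single r 1 - Finsupp.single q 1 := by
        have e : Finsupp.mapDomain (pact h) z = Finsupp.lmapDomain R R (pact h) z := rfl
        rw [e, hz, map_sub]
        simp only [Finsupp.lmapDomain_apply, Finsupp.mapDomain_single, hh1, hh2]
      have he1 : Finsupp.mapDomain (pact g) z - z ∈ S :=
        Submodule.subset_span ⟨g, z, hzker, rfl⟩
      have he2 : Finsupp.mapDomain (pact h) z - z ∈ S :=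
        Submodule.subset_span ⟨h, z, hzker, rfl⟩
      have heq : Finsupp.single p (1 : R) - Finsupp.single q 1 =
          -(Finsupp.mapDomain (pact g) z - z) - (Finsupp.mapDomain (pact h) z - z) := by
        rw [hmg, hmh, hz]; abel
      rw [hz, heq]
      exact S.sub_mem (S.neg_mem he1) he2
  have h10 : (![1, 0] : Fin 2 → F) ≠ 0 := by intro h; simpa using congrFun h 0
  set p₀ : ℙ F (Fin 2 → F) := mk F ![1, 0] h10 with hp₀
  have haug : ∑ p ∈ x.support, x p = 0 := by
    have hx' := hx
    rw [LinearMap.mem_ker] at hx'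
    simpa [aug, Finsupp.linearCombination_apply, Finsupp.sum] using hx'
  have hxe : x = ∑ p ∈ x.support, x p • (Finsupp.single p (1 : R) - Finsupp.single p₀ 1) := by
    simp only [smul_sub]
    rw [Finset.sum_sub_distrib, ← Finset.sum_smul, haug, zero_smul, sub_zero]
    conv_lhs => rw [← Finsupp.sum_single x]
    rw [Finsupp.sum]
    exact Finset.sum_congr rfl fun p _ => by rw [Finsupp.smul_single', mul_one]
  rw [hxe]
  exact Submodule.sum_mem S fun p _ => S.smul_mem _ (key p p₀)
end

section
/- Let $\Field$ be a field with at least $3$ elements and $R$ a commutative ring. Then for every pair of distinct lines $L, L' \in \mathbb{P}^1(\Field)$, the element $[L] - [L']$ of $\widetilde{H}_0(\mathbb{P}^1(\Field);R)$ lies in the submodule generated by elements of the form $g\cdot x - x$ with $g \in \SL_2(\Field)$ and $x \in \widetilde{H}_0(\mathbb{P}^1(\Field);R)$. -/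
open Projectivization
open scoped LinearAlgebra.Projectivization

section aux

variable {F : Type*} [Field F]

lemma e0_ne_zero : (![1, 0] : Fin 2 → F) ≠ 0 := by
  intro h; have := congrFun h 0; simp at this

lemma e1_ne_zero : (![0, 1] : Fin 2 → F) ≠ 0 := by
  intro h; have := congrFun h 1; simp at this

/-- The standard point `[1:0]`. -/
noncomputable def P0 : ℙ F (Fin 2 → F) := Projectivization.mk F ![1, 0] e0_ne_zero

/-- The standard point `[0:1]`. -/
noncomputable def P1 : ℙ F (Fin 2 → F) := Projectivization.mk F ![0, 1] e1_ne_zero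

lemma P0_ne_P1 : (P0 : ℙ F (Fin 2 → F)) ≠ P1 := by
  simp only [P0, P1, Ne, Projectivization.mk_eq_mk_iff']
  rintro ⟨a, ha⟩
  have := congrFun ha 0
  simp at this

/-- `SL₂(F)` moves the standard pair `(P0, P1)` to any pair of distinct lines. -/
lemma exists_sl2_moves (L L' : ℙ F (Fin 2 → F)) (hLL' : L ≠ L') :
    ∃ g : Matrix.SpecialLinearGroup (Fin 2) F, pact g P0 = L ∧ pact g P1 = L' := by
  induction L using Projectivization.ind with | h v hv =>
  induction L' using Projectivization.ind with | h w hw =>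
  set d : F := v 0 * w 1 - v 1 * w 0 with hd_def
  have hd : d ≠ 0 := by
    intro hd0
    apply hLL'
    rw [Projectivization.mk_eq_mk_iff']
    have hrel : v 0 * w 1 = v 1 * w 0 := sub_eq_zero.mp hd0
    by_cases h0 : w 0 ≠ 0
    · refine ⟨v 0 / w 0, funext fun i => ?_⟩
      fin_cases i
      · show v 0 / w 0 * w 0 = v 0
        field_simp
      · show v 0 / w 0 * w 1 = v 1
        field_simp
        linear_combination hrel
    · push_neg at h0
      have h1 : w 1 ≠ 0 := by
        intro h1
        apply hw
        funext i; fin_cases i <;> simp [h0, h1]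
      have hv0 : v 0 = 0 := by
        rw [h0, mul_zero] at hrel
        exact (mul_eq_zero.mp hrel).resolve_right h1
      refine ⟨v 1 / w 1, funext fun i => ?_⟩
      fin_cases i
      · show v 1 / w 1 * w 0 = v 0
        rw [h0, hv0, mul_zero]
      · show v 1 / w 1 * w 1 = v 1
        field_simp
  refine ⟨⟨!![v 0, w 0 / d; v 1, w 1 / d], ?_⟩, ?_, ?_⟩
  · rw [Matrix.det_fin_two_of]
    field_simp
    ring
  · rw [P0]; unfold pact; rw [Projectivization.map_mk]
    rw [Projectivization.mk_eq_mk_iff']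
    refine ⟨1, ?_⟩
    funext i
    simp only [LinearEquiv.coe_coe, Matrix.SpecialLinearGroup.toLin'_apply,
      Matrix.toLin'_apply, one_smul]
    fin_cases i <;>
      (erw [Matrix.SpecialLinearGroup.toLin'_apply]; simp [Matrix.mulVec, dotProduct, Fin.sum_univ_two])
  · rw [P1]; unfold pact; rw [Projectivization.map_mk]
    rw [Projectivization.mk_eq_mk_iff']
    refine ⟨d⁻¹, ?_⟩
    funext i
    simp only [LinearEquiv.coe_coe, Matrix.SpecialLinearGroup.toLin'_apply,
      Matrix.toLin'_apply, Pi.smul_apply, smul_eq_mul]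
    fin_cases i <;>
      (erw [Matrix.SpecialLinearGroup.toLin'_apply]; simp [Matrix.mulVec, dotProduct, Fin.sum_univ_two, div_eq_inv_mul])

/-- `ℙ¹(F)` has at least as many points as `F`. -/
lemma card_proj_ge : Cardinal.mk F ≤ Cardinal.mk (ℙ F (Fin 2 → F)) := by
  have hinj : Function.Injective (fun a : F =>
      Projectivization.mk F ![a, 1] (by
        intro h; have := congrFun h 1; simp at this)) := by
    intro a b hab
    simp only [Projectivization.mk_eq_mk_iff'] at hab
    obtain ⟨c, hc⟩ := hab
    have h1 := congrFun hc 1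
    have h0 := congrFun hc 0
    simp [Pi.smul_apply, smul_eq_mul] at h1 h0
    rw [h1] at h0
    simpa using h0.symm
  exact Cardinal.mk_le_of_injective hinj

end aux

/-- If `F` has at least 3 elements, then for any two distinct lines `L, L'` in `F²`,
the element `[L] - [L']` of `H̃₀(ℙ¹(F);R)` lies in the submodule generated by the
elements `g • x - x` with `g ∈ SL₂(F)` and `x` in `H̃₀(ℙ¹(F);R)`. -/
theorem steinberg_gl2_difference_in_augmentation_submodule (F R : Type*) [Field F]
    [CommRing R] (hF : 3 ≤ Cardinal.mk F)
    (L L' : ℙ F (Fin 2 → F)) (hLL' : L ≠ L') :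
    Finsupp.single L (1 : R) - Finsupp.single L' 1 ∈ Submodule.span R
      {y : ℙ F (Fin 2 → F) →₀ R | ∃ (g : Matrix.SpecialLinearGroup (Fin 2) F)
        (z : ℙ F (Fin 2 → F) →₀ R), z ∈ LinearMap.ker (aug F R) ∧
          y = Finsupp.mapDomain (pact g) z - z} := by
  classical
  set S : Submodule R (ℙ F (Fin 2 → F) →₀ R) := Submodule.span R
      {y : ℙ F (Fin 2 → F) →₀ R | ∃ (g : Matrix.SpecialLinearGroup (Fin 2) F)
        (z : ℙ F (Fin 2 → F) →₀ R), z ∈ LinearMap.ker (aug F R) ∧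
          y = Finsupp.mapDomain (pact g) z - z} with hS
  -- the base element c₀₁
  set c01 : ℙ F (Fin 2 → F) →₀ R :=
    Finsupp.single (P0 : ℙ F (Fin 2 → F)) 1 - Finsupp.single P1 1 with hc01
  have hker : c01 ∈ LinearMap.ker (aug F R) := by
    rw [LinearMap.mem_ker, hc01, map_sub, aug,
      Finsupp.linearCombination_single, Finsupp.linearCombination_single]
    simp
  -- key: for any distinct pair (A, B), [A]-[B] - c₀₁ ∈ S
  have key : ∀ A B : ℙ F (Fin 2 → F), A ≠ B →
      Finsupp.single A (1 : R) - Finsupp.single B 1 - c01 ∈ S := by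
    intro A B hAB
    obtain ⟨g, hg0, hg1⟩ := exists_sl2_moves A B hAB
    have : Finsupp.single A (1 : R) - Finsupp.single B 1 - c01 =
        Finsupp.mapDomain (pact g) c01 - c01 := by
      have hmds : Finsupp.mapDomain (pact g) c01 =
          Finsupp.mapDomain (pact g) (Finsupp.single (P0 : ℙ F (Fin 2 → F)) (1 : R)) -
          Finsupp.mapDomain (pact g) (Finsupp.single P1 1) := by
        rw [hc01, ← Finsupp.lmapDomain_apply R R, ← Finsupp.lmapDomain_apply R R,
          ← Finsupp.lmapDomain_apply R R, map_sub]
      rw [hmds, Finsupp.mapDomain_single, Finsupp.mapDomain_single, hg0, hg1, hc01]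
    rw [this, hS]
    exact Submodule.subset_span ⟨g, c01, hker, rfl⟩
  -- pick a third point C
  have hcard : (3 : Cardinal) ≤ Cardinal.mk (ℙ F (Fin 2 → F)) :=
    le_trans hF card_proj_ge
  obtain ⟨C, hCL, hCL'⟩ := Cardinal.three_le hcard L L'
  have h1 : Finsupp.single L (1 : R) - Finsupp.single C 1 - c01 ∈ S :=
    key L C (Ne.symm hCL)
  have h2 : Finsupp.single C (1 : R) - Finsupp.single L' 1 - c01 ∈ S :=
    key C L' hCL'
  have h3 : Finsupp.single L (1 : R) - Finsupp.single L' 1 - c01 ∈ S :=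
    key L L' hLL'
  have hc01S : c01 ∈ S := by
    have := S.sub_mem h3 (S.add_mem h1 h2)
    have heq : Finsupp.single L (1 : R) - Finsupp.single L' 1 - c01 -
        (Finsupp.single L (1 : R) - Finsupp.single C 1 - c01 +
          (Finsupp.single C (1 : R) - Finsupp.single L' 1 - c01)) = c01 := by
      abel
    rwa [heq] at this
  have := S.add_mem h3 hc01S
  rwa [sub_add_cancel] at this
end

section
/- Let $G$ be a group, $P \leq G$ a subgroup, $U \trianglelefteq P$ a normal subgroup and $L \leq P$ a subgroup with $P = U \rtimes L$ (i.e. $P = UL$ and $U \cap L = 1$). Let $S \leq P$ be a subgroup containing $U$, and set $H = S \cap L$. Then for any commutative ring $R$ and any $R[L]$-module $N$, there is an isomorphism of $R[S]$-modules $\mathrm{Res}^P_S \mathrm{Ind}_L^P N \cong \mathrm{Ind}_H^S \mathrm{Res}^L_H N$. -/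
section
variable (R : Type*) [CommRing R] {P : Type*} [Group P]
variable (L S : Subgroup P)
variable (N : Type*) [AddCommGroup N] [Module R N] (ρ : Representation R L N)

/-- The relations defining the induced module `Ind_L^P N` as a quotient of the free
module `⊕_{p ∈ P} N`: `(p·l) ⊗ n ∼ p ⊗ (l · n)`. -/
noncomputable def indRelP : Submodule R (P →₀ N) :=
  Submodule.span R {w | ∃ (p : P) (l : L) (n : N),
    w = Finsupp.single (p * (l : P)) n - Finsupp.single p (ρ l n)}

/-- The induced module `Ind_L^P N`. -/
def IndP := (P →₀ N) ⧸ indRelP R L N ρ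

noncomputable instance : AddCommGroup (IndP R L N ρ) := inferInstanceAs (AddCommGroup ((P →₀ N) ⧸ _))
noncomputable instance : Module R (IndP R L N ρ) := inferInstanceAs (Module R ((P →₀ N) ⧸ _))

/-- The relations defining `Ind_H^S (Res^L_H N)`, where `H = S ⊓ L`:
`(s·h) ⊗ n ∼ s ⊗ (h · n)` for `h ∈ S` lying in `L`. -/
noncomputable def indRelS : Submodule R ((S : Type _) →₀ N) :=
  Submodule.span R {w | ∃ (s h : S) (hh : (h : P) ∈ L) (n : N),
    w = Finsupp.single (s * h) n - Finsupp.single s (ρ ⟨(h : P), hh⟩ n)}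

/-- The induced module `Ind_H^S (Res^L_H N)` with `H = S ⊓ L`. -/
def IndS := ((S : Type _) →₀ N) ⧸ indRelS R L S N ρ

noncomputable instance : AddCommGroup (IndS R L S N ρ) :=
  inferInstanceAs (AddCommGroup (((S : Type _) →₀ N) ⧸ _))
noncomputable instance : Module R (IndS R L S N ρ) :=
  inferInstanceAs (Module R (((S : Type _) →₀ N) ⧸ _))

end

/-- Mackey's formula in the single-double-coset case: if `P = U ⋊ L` with `U` normal,
and `U ≤ S ≤ P`, then with `H = S ⊓ L` there is an `S`-equivariant `R`-linear
isomorphism `Res^P_S Ind_L^P N ≅ Ind_H^S Res^L_H N`.  (The `S`-actions on both sides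
are induced by left translation on the free modules.) -/
theorem mackey_res_ind_single_coset
    (R : Type*) [CommRing R] (P : Type*) [Group P]
    (U L S : Subgroup P) (hU : U.Normal)
    (hUL : U ⊓ L = ⊥) (hP : U ⊔ L = ⊤) (hUS : U ≤ S)
    (N : Type*) [AddCommGroup N] [Module R N] (ρ : Representation R L N) :
    ∃ e : IndP R L N ρ ≃ₗ[R] IndS R L S N ρ,
      ∀ (s : S) (x : P →₀ N) (y : (S : Type _) →₀ N),
        e (Submodule.Quotient.mk x) = Submodule.Quotient.mk y →
        e (Submodule.Quotient.mk (Finsupp.mapDomain (fun p => (s : P) * p) x)) =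
          Submodule.Quotient.mk (Finsupp.mapDomain (fun t => s * t) y) := by
  classical
  haveI := hU
  -- decomposition p = v p * w p with v p ∈ U, w p ∈ L
  have hdec : ∀ p : P, ∃ u l : P, u ∈ U ∧ l ∈ L ∧ u * l = p := by
    intro p
    have hp : p ∈ ((U ⊔ L : Subgroup P) : Set P) := by
      rw [hP]; exact Subgroup.mem_top p
    rw [Subgroup.normal_mul] at hp
    obtain ⟨u, hu, l, hl, h⟩ := hp
    exact ⟨u, l, hu, hl, h⟩
  choose v w hvU hwL hvw using hdec
  -- uniqueness of decomposition
  have huniq : ∀ u₁ l₁ u₂ l₂ : P, u₁ ∈ U → l₁ ∈ L → u₂ ∈ U → l₂ ∈ L →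
      u₁ * l₁ = u₂ * l₂ → u₁ = u₂ ∧ l₁ = l₂ := by
    intro u₁ l₁ u₂ l₂ hu₁ hl₁ hu₂ hl₂ h
    have h1 : u₂⁻¹ * u₁ = l₂ * l₁⁻¹ := by
      calc u₂⁻¹ * u₁ = u₂⁻¹ * (u₁ * l₁) * l₁⁻¹ := by group
        _ = u₂⁻¹ * (u₂ * l₂) * l₁⁻¹ := by rw [h]
        _ = l₂ * l₁⁻¹ := by group
    have h2 : u₂⁻¹ * u₁ ∈ U ⊓ L := by
      rw [Subgroup.mem_inf]
      refine ⟨mul_mem (inv_mem hu₂) hu₁, ?_⟩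
      rw [h1]; exact mul_mem hl₂ (inv_mem hl₁)
    rw [hUL, Subgroup.mem_bot] at h2
    have hu : u₁ = u₂ := (inv_mul_eq_one.mp h2).symm
    refine ⟨hu, ?_⟩
    rw [hu] at h
    exact mul_left_cancel h
  have key1 : ∀ (p l : P), l ∈ L → v (p * l) = v p ∧ w (p * l) = w p * l := by
    intro p l hl
    refine huniq _ _ _ _ (hvU _) (hwL _) (hvU p) (mul_mem (hwL p) hl) ?_
    rw [hvw, ← mul_assoc, hvw]
  have key2 : ∀ s p : P, v (s * p) = v s * (w s * v p * (w s)⁻¹) ∧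
      w (s * p) = w s * w p := by
    intro s p
    refine huniq _ _ _ _ (hvU _) (hwL _)
      (mul_mem (hvU s) (hU.conj_mem _ (hvU p) _)) (mul_mem (hwL s) (hwL p)) ?_
    rw [hvw]
    conv_lhs => rw [← hvw s, ← hvw p]
    group
  have hvS : ∀ p : P, v p ∈ S := fun p => hUS (hvU p)
  have hwS : ∀ p : P, p ∈ S → w p ∈ S := by
    intro p hp
    have hwp : w p = (v p)⁻¹ * p := by
      rw [eq_inv_mul_iff_mul_eq]; exact hvw p
    rw [hwp]; exact mul_mem (inv_mem (hvS p)) hp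
  set KP := indRelP R L N ρ with hKP
  set KS := indRelS R L S N ρ with hKS
  -- forward map on free modules
  set f : (P →₀ N) →ₗ[R] (((S : Type _) →₀ N) ⧸ KS) :=
    Finsupp.lsum R fun p =>
      KS.mkQ ∘ₗ Finsupp.lsingle (⟨v p, hvS p⟩ : S) ∘ₗ (ρ ⟨w p, hwL p⟩) with hf_def
  have hf_single : ∀ (p : P) (n : N),
      f (Finsupp.single p n)
        = KS.mkQ (Finsupp.single (⟨v p, hvS p⟩ : S) (ρ ⟨w p, hwL p⟩ n)) := by
    intro p n
    simp [hf_def]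
  have hf : KP ≤ LinearMap.ker f := by
    rw [hKP, indRelP, Submodule.span_le]
    rintro _ ⟨p, l, n, rfl⟩
    simp only [SetLike.mem_coe, LinearMap.mem_ker, map_sub, hf_single]
    have h1 : v (p * (l : P)) = v p := (key1 p l l.2).1
    have h2 : w (p * (l : P)) = w p * l := (key1 p l l.2).2
    have h3 : (⟨w (p * (l : P)), hwL _⟩ : L) = ⟨w p, hwL p⟩ * l := by
      ext; simp [h2]
    have h4 : (⟨v (p * (l : P)), hvS _⟩ : S) = ⟨v p, hvS p⟩ := by
      ext; simp [h1]
    rw [h3, h4, map_mul]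
    simp
  have hg : KS ≤ LinearMap.ker
      ((Finsupp.lsum R fun s : S => KP.mkQ ∘ₗ Finsupp.lsingle (s : P)) :
        ((S : Type _) →₀ N) →ₗ[R] ((P →₀ N) ⧸ KP)) := by
    rw [hKS, indRelS, Submodule.span_le]
    rintro _ ⟨s, h, hh, n, rfl⟩
    simp only [SetLike.mem_coe, LinearMap.mem_ker, map_sub, Finsupp.lsum_single,
      LinearMap.comp_apply, Finsupp.lsingle_apply, Submodule.mkQ_apply]
    rw [sub_eq_zero, Submodule.Quotient.eq]
    exact Submodule.subset_span ⟨(s : P), ⟨(h : P), hh⟩, n, rfl⟩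
  set g : ((S : Type _) →₀ N) →ₗ[R] ((P →₀ N) ⧸ KP) :=
    Finsupp.lsum R fun s : S => KP.mkQ ∘ₗ Finsupp.lsingle (s : P) with hg_def
  have hg_single : ∀ (s : S) (n : N),
      g (Finsupp.single s n) = KP.mkQ (Finsupp.single (s : P) n) := by
    intro s n; simp [hg_def]
  set fbar : ((P →₀ N) ⧸ KP) →ₗ[R] (((S : Type _) →₀ N) ⧸ KS) := KP.liftQ f hf with hfbar
  set gbar : (((S : Type _) →₀ N) ⧸ KS) →ₗ[R] ((P →₀ N) ⧸ KP) := KS.liftQ g hg with hgbar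
  have hfg : fbar.comp gbar = LinearMap.id := by
    apply Submodule.linearMap_qext
    apply Finsupp.lhom_ext'
    intro s
    apply LinearMap.ext
    intro n
    simp only [LinearMap.comp_apply, Finsupp.lsingle_apply, Submodule.mkQ_apply,
      LinearMap.id_apply]
    rw [hfbar, hgbar]
    simp only [Submodule.liftQ_apply, hg_single, Submodule.mkQ_apply, hf_single]
    rw [Submodule.Quotient.eq]
    have hsS : w (s : P) ∈ S := hwS _ s.2
    have hdec : (⟨v (s : P), hvS _⟩ : S) * ⟨w (s : P), hsS⟩ = s := by
      ext; simp [hvw]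
    have := Submodule.subset_span (R := R) (s := {w | ∃ (s h : S) (hh : (h : P) ∈ L) (n : N),
        w = Finsupp.single (s * h) n - Finsupp.single s (ρ ⟨(h : P), hh⟩ n)})
      ⟨(⟨v (s : P), hvS _⟩ : S), ⟨w (s : P), hsS⟩, hwL _, n, rfl⟩
    rw [hdec] at this
    rw [hKS, indRelS]
    have heq : Finsupp.single (⟨v (s : P), hvS _⟩ : S) (ρ ⟨w (s : P), hwL _⟩ n)
        - Finsupp.single s n
        = -(Finsupp.single s n
          - Finsupp.single (⟨v (s : P), hvS _⟩ : S) (ρ ⟨w (s : P), hwL _⟩ n)) :=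
      (neg_sub _ _).symm
    rw [heq]
    exact neg_mem this
  have hgf : gbar.comp fbar = LinearMap.id := by
    apply Submodule.linearMap_qext
    apply Finsupp.lhom_ext'
    intro p
    apply LinearMap.ext
    intro n
    simp only [LinearMap.comp_apply, Finsupp.lsingle_apply, Submodule.mkQ_apply,
      LinearMap.id_apply]
    rw [hgbar, hfbar]
    simp only [Submodule.liftQ_apply, hf_single, Submodule.mkQ_apply, hg_single]
    rw [Submodule.Quotient.eq]
    have := Submodule.subset_span (R := R) (s := {x | ∃ (p : P) (l : L) (n : N),
        x = Finsupp.single (p * (l : P)) n - Finsupp.single p (ρ l n)})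
      ⟨v p, ⟨w p, hwL p⟩, n, rfl⟩
    rw [hKP, indRelP]
    have heq : Finsupp.single (v p) (ρ ⟨w p, hwL p⟩ n) - Finsupp.single p n
        = -(Finsupp.single (v p * w p) n - Finsupp.single (v p) (ρ ⟨w p, hwL p⟩ n)) := by
      rw [hvw]; exact (neg_sub _ _).symm
    rw [heq]
    exact neg_mem this
  set e0 : ((P →₀ N) ⧸ KP) ≃ₗ[R] (((S : Type _) →₀ N) ⧸ KS) :=
    LinearEquiv.ofLinear fbar gbar hfg hgf with he0
  refine ⟨e0, ?_⟩
  intro s x y hxy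
  have hxy' : fbar (Submodule.Quotient.mk x)
      = (Submodule.Quotient.mk y : ((S : Type _) →₀ N) ⧸ KS) := hxy
  show fbar (Submodule.Quotient.mk (Finsupp.mapDomain (fun p => (s : P) * p) x))
      = (Submodule.Quotient.mk (Finsupp.mapDomain (fun t => s * t) y) :
          ((S : Type _) →₀ N) ⧸ KS)
  -- translation map on IndS
  have hτker : KS ≤ LinearMap.ker
      (KS.mkQ ∘ₗ Finsupp.lmapDomain N R (fun t : S => s * t)) := by
    rw [hKS, indRelS, Submodule.span_le]
    rintro _ ⟨s', h, hh, n, rfl⟩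
    simp only [SetLike.mem_coe, LinearMap.mem_ker, map_sub, LinearMap.comp_apply,
      Finsupp.lmapDomain_apply, Finsupp.mapDomain_single, Submodule.mkQ_apply]
    rw [sub_eq_zero, Submodule.Quotient.eq]
    refine Submodule.subset_span ⟨s * s', h, hh, n, ?_⟩
    rw [mul_assoc]
  set τ : (((S : Type _) →₀ N) ⧸ KS) →ₗ[R] (((S : Type _) →₀ N) ⧸ KS) :=
    KS.liftQ (KS.mkQ ∘ₗ Finsupp.lmapDomain N R (fun t : S => s * t)) hτker with hτ
  have hτmk : ∀ z : (S : Type _) →₀ N,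
      τ (Submodule.Quotient.mk z)
        = Submodule.Quotient.mk (Finsupp.mapDomain (fun t : S => s * t) z) := by
    intro z
    rw [hτ]
    erw [Submodule.liftQ_apply]
    rfl
  -- intertwining
  have hinter : ∀ z : P →₀ N,
      fbar (Submodule.Quotient.mk (Finsupp.mapDomain (fun p => (s : P) * p) z))
        = τ (fbar (Submodule.Quotient.mk z)) := by
    intro z
    have hcomp : (fbar ∘ₗ KP.mkQ ∘ₗ Finsupp.lmapDomain N R (fun p => (s : P) * p))
        = τ ∘ₗ fbar ∘ₗ KP.mkQ := by
      apply Finsupp.lhom_ext'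
      intro p
      apply LinearMap.ext
      intro n
      simp only [LinearMap.comp_apply, Finsupp.lsingle_apply, Finsupp.lmapDomain_apply,
        Finsupp.mapDomain_single, Submodule.mkQ_apply]
      rw [hfbar, Submodule.liftQ_apply, Submodule.liftQ_apply, hf_single, hf_single]
      simp only [Submodule.mkQ_apply]
      rw [hτmk, Finsupp.mapDomain_single]
      rw [Submodule.Quotient.eq]
      have hsS : w (s : P) ∈ S := hwS _ s.2
      have h1 := (key2 (s : P) p).1
      have h2 := (key2 (s : P) p).2
      have hdecS : (s * (⟨v p, hvS p⟩ : S)) = (⟨v ((s : P) * p), hvS _⟩ : S)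
          * ⟨w (s : P), hsS⟩ := by
        ext
        simp only [Subgroup.coe_mul, h1]
        conv_lhs => rw [← hvw (s : P)]
        group
      have h3 : (⟨w ((s : P) * p), hwL _⟩ : L)
          = ⟨w (s : P), hwL _⟩ * ⟨w p, hwL p⟩ := by
        ext; simp [h2]
      rw [h3, map_mul]
      have := Submodule.subset_span (R := R) (s := {x | ∃ (s h : S) (hh : (h : P) ∈ L) (n : N),
          x = Finsupp.single (s * h) n - Finsupp.single s (ρ ⟨(h : P), hh⟩ n)})
        ⟨(⟨v ((s : P) * p), hvS _⟩ : S), ⟨w (s : P), hsS⟩, hwL _, ρ ⟨w p, hwL p⟩ n, rfl⟩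
      rw [hKS, indRelS]
      have heq : Finsupp.single (⟨v ((s : P) * p), hvS _⟩ : S)
            ((ρ ⟨w (s : P), hwL _⟩ * ρ ⟨w p, hwL p⟩) n)
          - Finsupp.single (s * (⟨v p, hvS p⟩ : S)) (ρ ⟨w p, hwL p⟩ n)
          = -(Finsupp.single ((⟨v ((s : P) * p), hvS _⟩ : S) * ⟨w (s : P), hsS⟩)
              (ρ ⟨w p, hwL p⟩ n)
            - Finsupp.single (⟨v ((s : P) * p), hvS _⟩ : S)
              (ρ ⟨w (s : P), hwL _⟩ (ρ ⟨w p, hwL p⟩ n))) := by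
        rw [hdecS]
        simp only [Module.End.mul_apply]
        exact (neg_sub _ _).symm
      rw [heq]
      exact neg_mem this
    have := LinearMap.congr_fun hcomp z
    simpa using this
  rw [hinter x, hxy', hτmk]
end

section
/- Let $\Field$ be a field, $R$ a commutative ring, and $n \geq 2$. Let $B$ be an $n \times (n+1)$ matrix over $\Field$ none of whose columns is zero, and for $0 \leq m \leq n$ let $B_m$ denote the $n\times n$ matrix obtained by deleting the $m$-th column. Then in the Steinberg module $\St_{\GL_n}(\Field;R) = \widetilde H_{n-2}(\Tits_{\GL_n}(\Field);R)$, the alternating sum of apartment classes vanishes: $\sum_{m=0}^{n} (-1)^m [\![B_m]\!] = 0$. -/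
open scoped Classical

section
variable (F : Type*) [Field F] (R : Type*) [CommRing R]

/-- A chain of `k` nonzero proper subspaces of `F^d`:
`0 ⊊ V₀ ⊊ ⋯ ⊊ V_{k-1} ⊊ F^d`.  These are the `(k-1)`-simplices of the Tits
building of `GL_d(F)` (with `k = 0` giving the empty simplex of the augmented
complex). -/
def TFlag (d k : ℕ) : Type _ :=
  {V : Fin k → Submodule F (Fin d → F) // StrictMono V ∧ ∀ i, V i ≠ ⊥ ∧ V i ≠ ⊤}

/-- The module of simplicial `(k-1)`-chains (with `R` coefficients) of the Tits
building of `GL_d(F)`, in its augmented (reduced) version. -/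
def TCh (d k : ℕ) := TFlag F d k →₀ R

noncomputable instance (d k : ℕ) : AddCommGroup (TCh F R d k) :=
  inferInstanceAs (AddCommGroup (TFlag F d k →₀ R))
noncomputable instance (d k : ℕ) : Module R (TCh F R d k) :=
  inferInstanceAs (Module R (TFlag F d k →₀ R))

/-- The `i`-th face of a flag: delete the `i`-th subspace. -/
def tface {d k : ℕ} (V : TFlag F d (k + 1)) (i : Fin (k + 1)) : TFlag F d k :=
  ⟨V.1 ∘ i.succAbove, V.2.1.comp (Fin.strictMono_succAbove i), fun j => V.2.2 _⟩

/-- The simplicial boundary map of the (augmented) Tits building. -/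
noncomputable def tbdry (d k : ℕ) : TCh F R d (k + 1) →ₗ[R] TCh F R d k :=
  Finsupp.lsum R fun V =>
    ∑ i : Fin (k + 1), ((-1 : R) ^ (i : ℕ)) • Finsupp.lsingle (tface F V i)

/-- The basis chain associated to a sequence of subspaces: the corresponding
generator if the sequence is a valid flag, and `0` otherwise (as for a simplicial
map collapsing a degenerate simplex). -/
noncomputable def tchainOf {d k : ℕ} (V : Fin k → Submodule F (Fin d → F)) :
    TCh F R d k :=
  if h : StrictMono V ∧ ∀ i, V i ≠ ⊥ ∧ V i ≠ ⊤ then Finsupp.single ⟨V, h⟩ 1 else 0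

/-- The apartment class of a `d × d` matrix `B` over `F` (with nonzero columns):
the pushforward of the fundamental class of the barycentric subdivision of the
boundary of a `(d-1)`-simplex, i.e. the signed sum over all permutations `π` of the
flags `⟨v_{π(0)}⟩ ⊊ ⟨v_{π(0)}, v_{π(1)}⟩ ⊊ ⋯`, where `v_j` are the columns of `B`. -/
noncomputable def apartment (d : ℕ) (B : Matrix (Fin d) (Fin d) F) :
    TCh F R d (d - 1) :=
  ∑ π : Equiv.Perm (Fin d), ((Equiv.Perm.sign π : ℤ)) •
    tchainOf F R (fun k : Fin (d - 1) =>
      Submodule.span F ((fun i : Fin d => fun r => B r (π i)) '' {i | (i : ℕ) ≤ (k : ℕ)}))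

/-- The chain map on the Tits building induced by a matrix `g` acting on `F^d`. -/
noncomputable def tmap {d k : ℕ} (g : Matrix (Fin d) (Fin d) F) :
    TCh F R d k →ₗ[R] TCh F R d k :=
  Finsupp.lsum R fun V => LinearMap.toSpanSingleton R _
    (tchainOf F R (fun i => Submodule.map (Matrix.mulVecLin g) (V.1 i)))

end


namespace ApartmentRelAux

open Equiv Equiv.Perm

variable {n : ℕ}

/-- `π : Perm (Fin n)` extended to `Fin (n+1)` fixing `last n`. -/
noncomputable def ext (π : Perm (Fin n)) : Perm (Fin (n + 1)) :=
  ((finSuccEquiv' (Fin.last n)).symm).permCongr π.optionCongr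

lemma ext_castSucc (π : Perm (Fin n)) (i : Fin n) :
    ext π (Fin.castSucc i) = Fin.castSucc (π i) := by
  have h : Fin.castSucc i = (Fin.last n).succAbove i := by rw [Fin.succAbove_last]
  rw [ext, Equiv.permCongr_apply, Equiv.symm_symm, h, finSuccEquiv'_succAbove]
  simp [finSuccEquiv'_symm_some, Fin.succAbove_last]

lemma ext_last (π : Perm (Fin n)) : ext π (Fin.last n) = Fin.last n := by
  rw [ext, Equiv.permCongr_apply, Equiv.symm_symm, finSuccEquiv'_at]
  simp [finSuccEquiv'_symm_none]

lemma sign_ext (π : Perm (Fin n)) : sign (ext π) = sign π := by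
  rw [ext, sign_permCongr, Equiv.optionCongr_sign]

/-- The permutation of `Fin (n+1)` sending `castSucc i ↦ m.succAbove (π i)` and `last ↦ m`. -/
noncomputable def E (m : Fin (n + 1)) (π : Perm (Fin n)) : Perm (Fin (n + 1)) :=
  (Fin.cycleRange m)⁻¹ * Fin.cycleRange (Fin.last n) * ext π

lemma E_castSucc (m : Fin (n + 1)) (π : Perm (Fin n)) (i : Fin n) :
    E m π (Fin.castSucc i) = m.succAbove (π i) := by
  have h1 : Fin.cycleRange (Fin.last n) (Fin.castSucc (π i)) = (π i).succ := by
    rw [← Fin.succAbove_last, Fin.cycleRange_succAbove]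
  have h2 : (Fin.cycleRange m)⁻¹ ((π i).succ) = m.succAbove (π i) := by
    rw [Equiv.Perm.inv_def, Equiv.symm_apply_eq, Fin.cycleRange_succAbove]
  simp [E, Equiv.Perm.mul_apply, ext_castSucc, h1, h2]

lemma E_last (m : Fin (n + 1)) (π : Perm (Fin n)) : E m π (Fin.last n) = m := by
  have h2 : (Fin.cycleRange m)⁻¹ (0 : Fin (n+1)) = m := by
    rw [Equiv.Perm.inv_def, Equiv.symm_apply_eq, Fin.cycleRange_self]
  simp [E, Equiv.Perm.mul_apply, ext_last, Fin.cycleRange_self, h2]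

lemma sign_E_int (m : Fin (n + 1)) (π : Perm (Fin n)) :
    ((Equiv.Perm.sign (E m π) : ℤ)) = (-1) ^ (m : ℕ) * (-1) ^ n * (Equiv.Perm.sign π : ℤ) := by
  have hinv : ((-1 : ℤˣ) ^ (m : ℕ))⁻¹ = (-1) ^ (m : ℕ) := by
    rw [← inv_pow]; norm_num
  have : Equiv.Perm.sign (E m π) = (-1) ^ (m : ℕ) * (-1) ^ n * Equiv.Perm.sign π := by
    rw [E, map_mul, map_mul, map_inv, Fin.sign_cycleRange, Fin.sign_cycleRange, sign_ext,
      Fin.val_last, hinv]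
  rw [this]
  simp [Units.val_mul]

lemma E_bijective :
    Function.Bijective (fun p : Fin (n + 1) × Perm (Fin n) => E p.1 p.2) := by
  rw [Fintype.bijective_iff_injective_and_card]
  constructor
  · rintro ⟨m, π⟩ ⟨m', π'⟩ h
    simp only at h
    have hm : m = m' := by rw [← E_last m π, ← E_last m' π', h]
    subst hm
    have hπ : π = π' := Equiv.ext fun i => by
      have h2 := congrArg (fun σ : Perm (Fin (n + 1)) => σ (Fin.castSucc i)) h
      simp only [E_castSucc] at h2
      exact Fin.succAbove_right_injective h2
    rw [hπ]
  · simp [Fintype.card_perm, Nat.factorial_succ]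

end ApartmentRelAux

noncomputable def gterm (F : Type*) [Field F] (R : Type*) [CommRing R] (m₀ : ℕ)
    (B : Matrix (Fin (m₀ + 2)) (Fin (m₀ + 3)) F) (σ : Equiv.Perm (Fin (m₀ + 3))) :
    TCh F R (m₀ + 2) (m₀ + 2 - 1) :=
  ((-1 : ℤ) ^ (m₀ + 2) * (Equiv.Perm.sign σ : ℤ)) •
    tchainOf F R (fun k : Fin (m₀ + 2 - 1) =>
      Submodule.span F ((fun i : Fin (m₀ + 2) => fun r => B r (σ (Fin.castSucc i))) ''
        {i | (i : ℕ) ≤ (k : ℕ)}))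

/-- **Relation among apartment classes.**  For an `n × (n+1)` matrix `B` over `F`
with no zero column, letting `Bₘ` be `B` with its `m`-th column deleted, the
alternating sum of the apartment classes `[[Bₘ]]` vanishes in the Steinberg module
`St_{GL_n}(F;R) = H̃_{n-2}(Tits building;R)` (which, the building being
`(n-2)`-dimensional, is the module of top-degree reduced cycles).  Here `n = m₀+2 ≥ 2`. -/theorem apartment_alternating_sum_eq_zero (F : Type*) [Field F] (R : Type*) [CommRing R]
    (m₀ : ℕ) (B : Matrix (Fin (m₀ + 2)) (Fin (m₀ + 3)) F)
    (hB : ∀ j, (fun i => B i j) ≠ 0) :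
    ∑ m : Fin (m₀ + 3), ((-1 : ℤ) ^ (m : ℕ)) •
      apartment F R (m₀ + 2) (fun i j => B i (m.succAbove j)) = 0 := by
  classical
  open ApartmentRelAux in
  have hs : ∀ (m : Fin (m₀ + 3)) (π : Equiv.Perm (Fin (m₀ + 2))),
      ((-1 : ℤ) ^ (m₀ + 2) * (Equiv.Perm.sign (E m π) : ℤ))
        = (-1) ^ (m : ℕ) * (Equiv.Perm.sign π : ℤ) := by
    intro m π
    rw [sign_E_int]
    have h1 : ((-1 : ℤ)) ^ (m₀ + 2) * ((-1 : ℤ)) ^ (m₀ + 2) = 1 := by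
      rw [← pow_add]
      exact Even.neg_one_pow ⟨m₀ + 2, by ring⟩
    linear_combination ((-1 : ℤ)) ^ (m : ℕ) * (Equiv.Perm.sign π : ℤ) * h1
  open ApartmentRelAux in
  calc (∑ m : Fin (m₀ + 3), ((-1 : ℤ) ^ (m : ℕ)) •
        apartment F R (m₀ + 2) (fun i j => B i (m.succAbove j)))
      = ∑ m : Fin (m₀ + 3), ∑ π : Equiv.Perm (Fin (m₀ + 2)), gterm F R m₀ B (E m π) := by
        refine Finset.sum_congr rfl fun m _ => ?_
        unfold apartment
        rw [Finset.smul_sum]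
        refine Finset.sum_congr rfl fun π _ => ?_
        rw [smul_smul, gterm, hs m π]
        simp only [E_castSucc]
    _ = ∑ p : Fin (m₀ + 3) × Equiv.Perm (Fin (m₀ + 2)), gterm F R m₀ B (E p.1 p.2) :=
        (Fintype.sum_prod_type (fun p : Fin (m₀ + 3) × Equiv.Perm (Fin (m₀ + 2)) =>
          gterm F R m₀ B (E p.1 p.2))).symm
    _ = ∑ σ : Equiv.Perm (Fin (m₀ + 3)), gterm F R m₀ B σ :=
        Fintype.sum_bijective _ E_bijective _ _ (fun p => rfl)
    _ = 0 := by
        set a : Fin (m₀ + 3) := ⟨m₀ + 1, by omega⟩ with ha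
        set b : Fin (m₀ + 3) := ⟨m₀ + 2, by omega⟩ with hb
        have hab : a ≠ b := by simp [ha, hb, Fin.ext_iff]
        have hswap : ∀ σ : Equiv.Perm (Fin (m₀ + 3)),
            gterm F R m₀ B (σ * Equiv.swap a b) = - gterm F R m₀ B σ := by
          intro σ
          rw [gterm, gterm]
          have hX : (fun k : Fin (m₀ + 2 - 1) =>
              Submodule.span F ((fun i : Fin (m₀ + 2) => fun r =>
                B r ((σ * Equiv.swap a b) (Fin.castSucc i))) '' {i | (i : ℕ) ≤ (k : ℕ)}))
              = (fun k : Fin (m₀ + 2 - 1) =>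
              Submodule.span F ((fun i : Fin (m₀ + 2) => fun r =>
                B r (σ (Fin.castSucc i))) '' {i | (i : ℕ) ≤ (k : ℕ)})) := by
            funext k
            congr 1
            apply Set.image_congr
            intro i hi
            have hik : (i : ℕ) ≤ (k : ℕ) := hi
            have hk : (k : ℕ) < m₀ + 2 - 1 := k.isLt
            have h1 : Fin.castSucc i ≠ a := by
              intro h
              apply_fun Fin.val at h
              simp [ha, Fin.coe_castSucc] at h
              omega
            have h2 : Fin.castSucc i ≠ b := by
              intro h
              apply_fun Fin.val at h
              simp [hb, Fin.coe_castSucc] at h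
              omega
            rw [Equiv.Perm.mul_apply, Equiv.swap_apply_of_ne_of_ne h1 h2]
          rw [hX]
          have hsgn : ((Equiv.Perm.sign (σ * Equiv.swap a b) : ℤ))
              = -(Equiv.Perm.sign σ : ℤ) := by
            rw [map_mul, Equiv.Perm.sign_swap hab]
            simp
          rw [hsgn, mul_neg, neg_smul]
        refine Finset.sum_ninvolution (fun σ => σ * Equiv.swap a b) ?_ ?_ ?_ ?_
        · intro σ
          rw [hswap]
          exact add_neg_cancel _
        · intro σ _ h
          have h1 : Equiv.swap a b = 1 := mul_left_cancel (h.trans (mul_one σ).symm)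
          have h2 : Equiv.swap a b a = b := Equiv.swap_apply_left a b
          rw [h1] at h2
          simp only [Equiv.Perm.one_apply] at h2
          exact hab h2
        · intro σ
          exact Finset.mem_univ _
        · intro σ
          show σ * Equiv.swap a b * Equiv.swap a b = σ
          rw [mul_assoc, Equiv.swap_mul_self, mul_one]
end

section
/- Let $\Field$ be a field and $R$ a commutative ring. The Steinberg module $\St_{\GL_n}(\Field;R) = \widetilde H_{n-2}(\Tits_{\GL_n}(\Field);R)$ is a free $R$-module with basis the apartment classes $[\![B]\!]$ as $B$ ranges over upper unitriangular matrices in $\GL_n(\Field)$. -/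
open scoped Classical

namespace SolTits

open Module Submodule

variable {F : Type*} [Field F]

variable (F) in
def Emod (d m : ℕ) : Submodule F (Fin d → F) where
  carrier := {x | ∀ i : Fin d, m ≤ (i : ℕ) → x i = 0}
  add_mem' := by intro a b ha hb i hi; simp only [Pi.add_apply, ha i hi, hb i hi, add_zero]
  zero_mem' := by intro i hi; rfl
  smul_mem' := by intro c x hx i hi; simp only [Pi.smul_apply, hx i hi, smul_zero]

lemma mem_Emod {d m : ℕ} {x : Fin d → F} :
    x ∈ Emod F d m ↔ ∀ i : Fin d, m ≤ (i : ℕ) → x i = 0 := Iff.rfl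

lemma Emod_zero {d : ℕ} : Emod F d 0 = ⊥ := by
  ext x
  simp only [mem_Emod, Submodule.mem_bot]
  constructor
  · intro h; funext i; exact h i (Nat.zero_le _)
  · rintro rfl i _; rfl

lemma Emod_mono {d m m' : ℕ} (h : m ≤ m') : Emod F d m ≤ Emod F d m' := by
  intro x hx i hi
  exact hx i (h.trans hi)

lemma flag_finrank {m₀ : ℕ} (C : TFlag F (m₀ + 2) (m₀ + 1)) (t : Fin (m₀ + 1)) :
    finrank F (C.1 t) = (t : ℕ) + 1 := by
  have hlow : ∀ t : Fin (m₀ + 1), (t : ℕ) + 1 ≤ finrank F (C.1 t) := by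
    intro t
    induction t using Fin.induction with
    | zero =>
      have : C.1 0 ≠ ⊥ := (C.2.2 0).1
      have h0 : finrank F (C.1 0) ≠ 0 := fun h => this (Submodule.finrank_eq_zero.mp h)
      simp only [Fin.val_zero]
      omega
    | succ i ih =>
      have hlt : C.1 i.castSucc < C.1 i.succ := C.2.1 Fin.castSucc_lt_succ
      have := Submodule.finrank_lt_finrank_of_lt hlt
      simp only [Fin.coe_castSucc] at ih
      simp only [Fin.val_succ]
      omega
  have hup : ∀ t : Fin (m₀ + 1), finrank F (C.1 t) ≤ (t : ℕ) + 1 := by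
    intro t
    induction t using Fin.reverseInduction with
    | last =>
      have : C.1 (Fin.last m₀) < ⊤ := lt_top_iff_ne_top.mpr (C.2.2 _).2
      have h1 := Submodule.finrank_lt (K := F) this.ne
      have h2 : finrank F (Fin (m₀ + 2) → F) = m₀ + 2 := by
        simp [Module.finrank_pi]
      simp only [Fin.val_last]
      omega
    | cast i ih =>
      have hlt : C.1 i.castSucc < C.1 i.succ := C.2.1 Fin.castSucc_lt_succ
      have := Submodule.finrank_lt_finrank_of_lt hlt
      simp only [Fin.val_succ] at ih
      simp only [Fin.coe_castSucc]
      omega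
  exact le_antisymm (hup t) (hlow t)

end SolTits
namespace SolTits

open Module Submodule

variable {F : Type*} [Field F] {m₀ : ℕ}

lemma tface_eq {C C' : TFlag F (m₀ + 2) (m₀ + 1)} {i j : Fin (m₀ + 1)}
    (h : tface F C' i = tface F C j) :
    i = j ∧ ∀ t, t ≠ j → C'.1 t = C.1 t := by
  have h1 : ∀ t : Fin m₀, C'.1 (i.succAbove t) = C.1 (j.succAbove t) := fun t =>
    congrFun (congrArg Subtype.val h) t
  have hij : i = j := by
    apply Fin.succAbove_left_injective
    funext t
    have e1 := flag_finrank C' (i.succAbove t)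
    have e2 := flag_finrank C (j.succAbove t)
    rw [h1 t] at e1
    exact Fin.ext (by omega)
  subst hij
  refine ⟨rfl, fun t ht => ?_⟩
  obtain ⟨s, hs⟩ := Fin.exists_succAbove_eq ht
  rw [← hs]
  exact h1 s

/-- Genericity of a chamber: each subspace is transverse to the corresponding
coordinate subspace. -/
def Generic (C : TFlag F (m₀ + 2) (m₀ + 1)) : Prop :=
  ∀ t : Fin (m₀ + 1), C.1 t ⊓ Emod F (m₀ + 2) (m₀ + 1 - (t : ℕ)) = ⊥

/-- The set of defect indices. -/
noncomputable def dSet (C : TFlag F (m₀ + 2) (m₀ + 1)) : Finset (Fin (m₀ + 1)) :=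
  Finset.univ.filter fun t => C.1 t ⊓ Emod F (m₀ + 2) (m₀ + 1 - (t : ℕ)) ≠ ⊥

lemma dSet_nonempty {C : TFlag F (m₀ + 2) (m₀ + 1)} (hC : ¬ Generic C) :
    (dSet C).Nonempty := by
  rw [Generic] at hC
  push_neg at hC
  obtain ⟨t, ht⟩ := hC
  exact ⟨t, by simp [dSet, ht]⟩

noncomputable def kC (C : TFlag F (m₀ + 2) (m₀ + 1)) : Fin (m₀ + 1) :=
  if h : (dSet C).Nonempty then (dSet C).max' h else 0

lemma kC_mem {C : TFlag F (m₀ + 2) (m₀ + 1)} (hC : ¬ Generic C) : kC C ∈ dSet C := by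
  rw [kC, dif_pos (dSet_nonempty hC)]
  exact Finset.max'_mem _ _

lemma kC_max {C : TFlag F (m₀ + 2) (m₀ + 1)} (hC : ¬ Generic C) {t : Fin (m₀ + 1)}
    (ht : t ∈ dSet C) : t ≤ kC C := by
  rw [kC, dif_pos (dSet_nonempty hC)]
  exact Finset.le_max' _ _ ht

/-- The defect space. -/
noncomputable def XC (C : TFlag F (m₀ + 2) (m₀ + 1)) : Submodule F (Fin (m₀ + 2) → F) :=
  C.1 (kC C) ⊓ Emod F (m₀ + 2) (m₀ + 1 - (kC C : ℕ))

lemma XC_ne_bot {C : TFlag F (m₀ + 2) (m₀ + 1)} (hC : ¬ Generic C) : XC C ≠ ⊥ := by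
  have := kC_mem hC
  simp only [dSet, Finset.mem_filter] at this
  exact this.2

noncomputable def jSet (C : TFlag F (m₀ + 2) (m₀ + 1)) : Finset (Fin (m₀ + 1)) :=
  Finset.univ.filter fun i => XC C ≤ C.1 i

lemma kC_mem_jSet (C : TFlag F (m₀ + 2) (m₀ + 1)) : kC C ∈ jSet C := by
  simp only [jSet, Finset.mem_filter, Finset.mem_univ, true_and]
  exact inf_le_left

noncomputable def jC (C : TFlag F (m₀ + 2) (m₀ + 1)) : Fin (m₀ + 1) :=
  (jSet C).min' ⟨kC C, kC_mem_jSet C⟩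

lemma jC_mem (C : TFlag F (m₀ + 2) (m₀ + 1)) : XC C ≤ C.1 (jC C) := by
  have : jC C ∈ jSet C := Finset.min'_mem _ _
  simpa only [jSet, Finset.mem_filter, Finset.mem_univ, true_and] using this

lemma jC_min {C : TFlag F (m₀ + 2) (m₀ + 1)} {i : Fin (m₀ + 1)} (hi : XC C ≤ C.1 i) :
    jC C ≤ i :=
  Finset.min'_le _ _ (by simp only [jSet, Finset.mem_filter, Finset.mem_univ, true_and]; exact hi)

lemma jC_le_kC (C : TFlag F (m₀ + 2) (m₀ + 1)) : jC C ≤ kC C :=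
  jC_min inf_le_left

/-- The weight of a chamber. -/
noncomputable def wt (C : TFlag F (m₀ + 2) (m₀ + 1)) : ℕ :=
  (kC C : ℕ) * (m₀ + 2) + ((kC C : ℕ) - (jC C : ℕ))

end SolTits
namespace SolTits

open Module Submodule

variable {F : Type*} [Field F] {m₀ : ℕ}

lemma fin_le_m₀ (t : Fin (m₀ + 1)) : (t : ℕ) ≤ m₀ := by omega

lemma main_step {C C' : TFlag F (m₀ + 2) (m₀ + 1)} (hC : ¬ Generic C) (hC' : ¬ Generic C')
    (hoff : ∀ t, t ≠ jC C → C'.1 t = C.1 t) (hW : C'.1 (jC C) ≠ C.1 (jC C)) :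
    wt C' < wt C := by
  obtain ⟨k, hk⟩ : ∃ k, k = kC C := ⟨_, rfl⟩
  obtain ⟨j, hj⟩ : ∃ j, j = jC C := ⟨_, rfl⟩
  rw [← hj] at hoff hW
  have hjk0 : j ≤ k := hj ▸ hk ▸ jC_le_kC C
  have hkv : (k : ℕ) = (kC C : ℕ) := by rw [hk]
  have hkm : (k : ℕ) ≤ m₀ := fin_le_m₀ k
  have hXle : XC C ≤ C.1 k := hk ▸ (inf_le_left : XC C ≤ C.1 (kC C))
  have hXleE : XC C ≤ Emod F (m₀ + 2) (m₀ + 1 - (k : ℕ)) := by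
    rw [hk]; exact inf_le_right
  have hXj : XC C ≤ C.1 j := hj ▸ jC_mem C
  have hXmin : ∀ i : Fin (m₀ + 1), XC C ≤ C.1 i → j ≤ i := fun i hi => hj ▸ jC_min hi
  -- the SUP submodule
  obtain ⟨SUP, hSUP⟩ : ∃ S, S = if _ : (k : ℕ) < m₀ then
      C.1 ⟨(k : ℕ) + 1, by omega⟩ else (⊤ : Submodule F (Fin (m₀ + 2) → F)) := ⟨_, rfl⟩
  have hUk_le_SUP : C.1 k ≤ SUP := by
    rw [hSUP]
    split
    · exact C.2.1.monotone (by rw [Fin.le_def]; simp)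
    · exact le_top
  have hSUP_inf : SUP ⊓ Emod F (m₀ + 2) (m₀ - (k : ℕ)) = ⊥ := by
    rw [hSUP]
    split
    case isTrue h =>
      have hne : (⟨(k : ℕ) + 1, by omega⟩ : Fin (m₀ + 1)) ∉ dSet C := by
        intro hmem
        have := kC_max hC hmem
        rw [Fin.le_def] at this
        simp only [] at this
        omega
      simp only [dSet, Finset.mem_filter, Finset.mem_univ, true_and, not_not] at hne
      have harith : m₀ + 1 - ((k : ℕ) + 1) = m₀ - (k : ℕ) := by omega
      rw [← harith]
      exact hne
    case isFalse h =>
      have : m₀ - (k : ℕ) = 0 := by omega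
      rw [this, Emod_zero, inf_bot_eq]
  -- Y and its rank
  obtain ⟨Y, hY⟩ : ∃ Y, Y = SUP ⊓ Emod F (m₀ + 2) (m₀ + 1 - (k : ℕ)) := ⟨_, rfl⟩
  have hYrank : finrank F Y ≤ 1 := by
    have hinj : ∀ y : Y, (y : Fin (m₀ + 2) → F) ⟨m₀ - (k : ℕ), by omega⟩ = 0 → y = 0 := by
      intro y hy
      have hy2 : (y : Fin (m₀ + 2) → F) ∈ SUP ⊓ Emod F (m₀ + 2) (m₀ + 1 - (k : ℕ)) := by
        rw [← hY]; exact y.2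
      have hymem : (y : Fin (m₀ + 2) → F) ∈ Emod F (m₀ + 2) (m₀ - (k : ℕ)) := by
        intro i hi
        rcases eq_or_lt_of_le hi with hE | hE
        · have : i = ⟨m₀ - (k : ℕ), by omega⟩ := Fin.ext hE.symm
          rw [this]; exact hy
        · exact hy2.2 i (by omega)
      have : (y : Fin (m₀ + 2) → F) ∈ SUP ⊓ Emod F (m₀ + 2) (m₀ - (k : ℕ)) :=
        ⟨hy2.1, hymem⟩
      rw [hSUP_inf] at this
      exact Subtype.ext this
    have : Function.Injective
        ((LinearMap.proj (⟨m₀ - (k : ℕ), by omega⟩ : Fin (m₀ + 2))).comp Y.subtype) := by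
      rw [← LinearMap.ker_eq_bot]
      rw [LinearMap.ker_eq_bot']
      intro y hy
      exact hinj y hy
    have := LinearMap.finrank_le_finrank_of_injective this
    simpa using this
  have hXY : XC C ≤ Y := by rw [hY]; exact le_inf (hXle.trans hUk_le_SUP) hXleE
  have hXrank : finrank F (XC C) = 1 := by
    have h0 : finrank F (XC C) ≠ 0 := fun h => XC_ne_bot hC (Submodule.finrank_eq_zero.mp h)
    have hle := (Submodule.finrank_mono hXY).trans hYrank
    omega
  have hXeqY : XC C = Y := Submodule.eq_of_le_of_finrank_le hXY (by rw [hXrank]; exact hYrank)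
  -- X is not contained in W
  have hXnotW : ¬ XC C ≤ C'.1 j := by
    intro hXW
    have hWrank : finrank F (C'.1 j) = (j : ℕ) + 1 := flag_finrank C' j
    by_cases hj0 : (j : ℕ) = 0
    · have hXU : XC C = C.1 j :=
        Submodule.eq_of_le_of_finrank_le hXj (by rw [flag_finrank C j, hXrank, hj0])
      refine hW ?_
      have : C.1 j ≤ C'.1 j := hXU ▸ hXW
      exact (Submodule.eq_of_le_of_finrank_le this
        (by rw [hWrank, flag_finrank C j])).symm
    · have hjpos : 0 < (j : ℕ) := Nat.pos_of_ne_zero hj0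
      obtain ⟨jm, hjm⟩ : ∃ jm : Fin (m₀ + 1), jm = ⟨(j : ℕ) - 1, by omega⟩ := ⟨_, rfl⟩
      have hjmval : (jm : ℕ) = (j : ℕ) - 1 := by rw [hjm]
      have hjm_lt : jm < j := by rw [Fin.lt_def]; omega
      have hUjm_le_W : C.1 jm ≤ C'.1 j := by
        rw [← hoff jm (ne_of_lt hjm_lt)]
        exact C'.2.1.monotone hjm_lt.le
      have hXjm : ¬ XC C ≤ C.1 jm := by
        intro hh
        exact absurd (hXmin jm hh) (not_le_of_gt hjm_lt)
      have hsup_le : C.1 jm ⊔ XC C ≤ C.1 j := sup_le (C.2.1.monotone hjm_lt.le) hXj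
      have hlt : C.1 jm < C.1 jm ⊔ XC C := left_lt_sup.mpr hXjm
      have h1 : (j : ℕ) < finrank F ↥(C.1 jm ⊔ XC C) := by
        have hh := Submodule.finrank_lt_finrank_of_lt hlt
        rw [flag_finrank C jm] at hh
        omega
      have heq : C.1 jm ⊔ XC C = C.1 j :=
        Submodule.eq_of_le_of_finrank_le hsup_le (by rw [flag_finrank C j]; omega)
      have hUj_le_W : C.1 j ≤ C'.1 j := by
        rw [← heq]; exact sup_le hUjm_le_W hXW
      exact hW (Submodule.eq_of_le_of_finrank_le hUj_le_W
        (by rw [hWrank, flag_finrank C j])).symm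
  -- case split: j = k or j < k
  rcases eq_or_lt_of_le hjk0 with hjk | hjk
  · -- case j = k
    rw [hjk] at hoff hW hXnotW
    have hWk : C'.1 k ⊓ Emod F (m₀ + 2) (m₀ + 1 - (k : ℕ)) = ⊥ := by
      have hW_le_SUP : C'.1 k ≤ SUP := by
        rw [hSUP]
        split
        case isTrue h =>
          have hne : (⟨(k : ℕ) + 1, by omega⟩ : Fin (m₀ + 1)) ≠ k := by
            rw [Fin.ne_iff_vne]; simp
          refine le_trans (C'.2.1.monotone (by rw [Fin.le_def]; simp)) (le_of_eq (hoff _ hne))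
        case isFalse h => exact le_top
      have h2 : C'.1 k ⊓ Emod F (m₀ + 2) (m₀ + 1 - (k : ℕ)) ≤ XC C := by
        rw [hXeqY, hY]
        exact inf_le_inf_right _ hW_le_SUP
      have h3 : C'.1 k ⊓ Emod F (m₀ + 2) (m₀ + 1 - (k : ℕ)) ≤ XC C ⊓ C'.1 k :=
        le_inf h2 inf_le_left
      have h4 : XC C ⊓ C'.1 k < XC C :=
        lt_of_le_of_ne inf_le_left (fun he => hXnotW (he ▸ inf_le_right))
      have h5 : finrank F ↥(XC C ⊓ C'.1 k) < 1 := by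
        have := Submodule.finrank_lt_finrank_of_lt h4
        omega
      have h6 : XC C ⊓ C'.1 k = ⊥ :=
        Submodule.finrank_eq_zero.mp (by omega)
      rw [h6] at h3
      exact le_bot_iff.mp h3
    have hsubset : ∀ t ∈ dSet C', (t : ℕ) < (k : ℕ) := by
      intro t ht
      simp only [dSet, Finset.mem_filter, Finset.mem_univ, true_and] at ht
      rcases lt_trichotomy t k with h | h | h
      · exact h
      · exact absurd (h ▸ hWk) ht
      · have hne : t ≠ k := ne_of_gt h
        rw [hoff t hne] at ht
        have hmem : t ∈ dSet C := by
          simp only [dSet, Finset.mem_filter, Finset.mem_univ, true_and]; exact ht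
        have := kC_max hC hmem
        rw [Fin.le_def] at this
        rw [Fin.lt_def] at h
        omega
    have hk' : (kC C' : ℕ) < (k : ℕ) := hsubset _ (kC_mem hC')
    rw [wt, wt, ← hk, ← hj]
    calc (kC C' : ℕ) * (m₀ + 2) + ((kC C' : ℕ) - (jC C' : ℕ))
        < (kC C' : ℕ) * (m₀ + 2) + (m₀ + 2) := by
          have : (kC C' : ℕ) - (jC C' : ℕ) ≤ m₀ := le_trans (Nat.sub_le _ _) (fin_le_m₀ _)
          omega
      _ = ((kC C' : ℕ) + 1) * (m₀ + 2) := by ring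
      _ ≤ (k : ℕ) * (m₀ + 2) := Nat.mul_le_mul_right _ (by omega)
      _ ≤ (k : ℕ) * (m₀ + 2) + ((k : ℕ) - (j : ℕ)) := Nat.le_add_right _ _
  · -- case j < k
    have hknej : k ≠ j := ne_of_gt hjk
    have hCk' : C'.1 k = C.1 k := hoff k hknej
    have hkmemC : k ∈ dSet C := hk ▸ kC_mem hC
    have hkd' : k ∈ dSet C' := by
      simp only [dSet, Finset.mem_filter, Finset.mem_univ, true_and] at hkmemC ⊢
      rw [hCk']
      exact hkmemC
    have hmax' : ∀ t ∈ dSet C', t ≤ k := by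
      intro t ht
      by_contra hgt
      push_neg at hgt
      have hne : t ≠ j := ne_of_gt (lt_trans hjk hgt)
      simp only [dSet, Finset.mem_filter, Finset.mem_univ, true_and] at ht
      rw [hoff t hne] at ht
      have hmem : t ∈ dSet C := by
        simp only [dSet, Finset.mem_filter, Finset.mem_univ, true_and]; exact ht
      have := kC_max hC hmem
      rw [Fin.le_def] at this
      rw [Fin.lt_def] at hgt
      omega
    have hkC' : kC C' = k := le_antisymm (hmax' _ (kC_mem hC')) (kC_max hC' hkd')
    have hXC' : XC C' = XC C := by
      rw [XC, XC, hkC', hCk', ← hk]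
    have hj' : (j : ℕ) < (jC C' : ℕ) := by
      by_contra hle
      push_neg at hle
      have hmem := jC_mem C'
      rw [hXC'] at hmem
      rcases eq_or_lt_of_le hle with hE | hE
      · have : jC C' = j := Fin.ext hE
        rw [this] at hmem
        exact hXnotW hmem
      · have hne : jC C' ≠ j := by rw [Fin.ne_iff_vne]; omega
        rw [hoff _ hne] at hmem
        have := hXmin _ hmem
        rw [Fin.le_def] at this
        omega
    have hjk'2 : (jC C' : ℕ) ≤ (k : ℕ) := by
      have := jC_le_kC C'
      rw [hkC'] at this
      exact this
    rw [wt, wt, ← hk, ← hj, hkC']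
    exact Nat.add_lt_add_left (Nat.sub_lt_sub_left hjk hj') _

end SolTits
namespace SolTits

open Module Submodule

variable {F : Type*} [Field F] {R : Type*} [CommRing R] {m₀ : ℕ}

/-- Reinterpret a chain as a finitely supported function. -/
def asF {d k : ℕ} (x : TCh F R d k) : TFlag F d k →₀ R := x

@[simp] lemma asF_zero {d k : ℕ} : asF (0 : TCh F R d k) = 0 := rfl

lemma tbdry_apply (z : TFlag F (m₀ + 2) (m₀ + 1) →₀ R) (G : TFlag F (m₀ + 2) m₀) :
    asF (tbdry F R (m₀ + 2) m₀ z) G =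
      z.sum fun V r => ∑ i : Fin (m₀ + 1),
        (if tface F V i = G then (-1 : R) ^ (i : ℕ) * r else 0) := by
  have hrw : asF (tbdry F R (m₀ + 2) m₀ z) =
      (Finsupp.lsum R fun V => ∑ i : Fin (m₀ + 1),
        ((-1 : R) ^ (i : ℕ)) • Finsupp.lsingle (R := R) (tface F V i)) z := rfl
  rw [hrw, Finsupp.lsum_apply, Finsupp.sum_apply]
  apply Finsupp.sum_congr
  intro V _
  rw [LinearMap.sum_apply, Finsupp.finset_sum_apply]
  apply Finset.sum_congr rfl
  intro i _
  rw [LinearMap.smul_apply, Finsupp.lsingle_apply, Finsupp.smul_apply, Finsupp.single_apply,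
    smul_eq_mul, mul_ite, mul_zero]

lemma cycle_eq_zero (z : TFlag F (m₀ + 2) (m₀ + 1) →₀ R)
    (hz : tbdry F R (m₀ + 2) m₀ z = 0)
    (hgen : ∀ C : TFlag F (m₀ + 2) (m₀ + 1), Generic C → z C = 0) : z = 0 := by
  by_contra hne
  obtain ⟨C₀, hC₀s, hmin⟩ :=
    Finset.exists_min_image z.support wt (Finsupp.support_nonempty_iff.mpr hne)
  have hzC₀ : z C₀ ≠ 0 := Finsupp.mem_support_iff.mp hC₀s
  have hC₀g : ¬ Generic C₀ := fun h => hzC₀ (hgen _ h)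
  have heval : asF (tbdry F R (m₀ + 2) m₀ z) (tface F C₀ (jC C₀)) = 0 := by
    rw [hz]; rfl
  rw [tbdry_apply, Finsupp.sum] at heval
  have houter : ∀ V ∈ z.support, V ≠ C₀ →
      (∑ i : Fin (m₀ + 1),
        (if tface F V i = tface F C₀ (jC C₀) then (-1 : R) ^ (i : ℕ) * z V else 0)) = 0 := by
    intro V hVs hVne
    apply Finset.sum_eq_zero
    intro i _
    rw [if_neg]
    intro hface
    obtain ⟨hi, hofff⟩ := tface_eq hface
    by_cases hVj : V.1 (jC C₀) = C₀.1 (jC C₀)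
    · apply hVne
      apply Subtype.ext
      funext t
      by_cases ht : t = jC C₀
      · rw [ht]; exact hVj
      · exact hofff t ht
    · have hVg : ¬ Generic V := fun h => (Finsupp.mem_support_iff.mp hVs) (hgen _ h)
      have := main_step hC₀g hVg hofff hVj
      exact absurd (hmin V hVs) (not_le_of_gt this)
  rw [Finset.sum_eq_single_of_mem C₀ hC₀s houter] at heval
  rw [Finset.sum_eq_single (jC C₀)] at heval
  · rw [if_pos rfl] at heval
    exact hzC₀ (((isUnit_one.neg.pow ((jC C₀ : ℕ))).mul_right_eq_zero).mp heval)
  · intro i _ hine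
    rw [if_neg]
    intro hface
    exact hine (tface_eq hface).1
  · intro h
    exact absurd (Finset.mem_univ _) h

end SolTits
namespace SolTits

open Module Submodule

variable {F : Type*} [Field F] {m₀ : ℕ}

lemma unitri_max_coord {d : ℕ} {B : Matrix (Fin d) (Fin d) F}
    (h1 : ∀ i, B i i = 1) (h0 : ∀ i j : Fin d, (j : ℕ) < (i : ℕ) → B i j = 0)
    (π : Equiv.Perm (Fin d)) (l : Fin d →₀ F) (hl : l ≠ 0) :
    ∃ i₀ ∈ l.support, (∀ i ∈ l.support, (π i : ℕ) ≤ (π i₀ : ℕ)) ∧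
      Finsupp.linearCombination F (fun i => fun r : Fin d => B r (π i)) l (π i₀) = l i₀ := by
  obtain ⟨i₀, hi₀, hmax⟩ := Finset.exists_max_image l.support (fun i => (π i : ℕ))
    (Finsupp.support_nonempty_iff.mpr hl)
  refine ⟨i₀, hi₀, hmax, ?_⟩
  rw [Finsupp.linearCombination_apply, Finsupp.sum, Finset.sum_apply]
  rw [Finset.sum_eq_single i₀]
  · simp [h1]
  · intro i hi hne
    have hlt : (π i : ℕ) < (π i₀ : ℕ) :=
      lt_of_le_of_ne (hmax i hi) (fun he => hne (π.injective (Fin.ext he)))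
    simp [h0 _ _ hlt]
  · intro h; exact absurd hi₀ h

lemma unitri_cols_li {d : ℕ} {B : Matrix (Fin d) (Fin d) F}
    (h1 : ∀ i, B i i = 1) (h0 : ∀ i j : Fin d, (j : ℕ) < (i : ℕ) → B i j = 0) :
    LinearIndependent F (fun j => fun r : Fin d => B r j) := by
  rw [linearIndependent_iff]
  intro l hl
  by_contra hl0
  obtain ⟨i₀, hi₀, _, hco⟩ := unitri_max_coord h1 h0 (Equiv.refl (Fin d)) l hl0
  have he : Finsupp.linearCombination F (fun i => fun r : Fin d => B r ((Equiv.refl (Fin d)) i)) l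
      = Finsupp.linearCombination F (fun j => fun r : Fin d => B r j) l := rfl
  rw [he, hl] at hco
  exact (Finsupp.mem_support_iff.mp hi₀) (by simpa using hco.symm)

lemma span_inf_Emod {d : ℕ} {B : Matrix (Fin d) (Fin d) F}
    (h1 : ∀ i, B i i = 1) (h0 : ∀ i j : Fin d, (j : ℕ) < (i : ℕ) → B i j = 0)
    (π : Equiv.Perm (Fin d)) (S : Set (Fin d)) (m : ℕ)
    (hS : ∀ i ∈ S, m ≤ (π i : ℕ)) :
    Submodule.span F ((fun i => fun r : Fin d => B r (π i)) '' S) ⊓ Emod F d m = ⊥ := by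
  rw [eq_bot_iff]
  intro x hx
  rw [Submodule.mem_inf] at hx
  obtain ⟨hx1, hx2⟩ := hx
  rw [Finsupp.mem_span_image_iff_linearCombination] at hx1
  obtain ⟨l, hlS, hxl⟩ := hx1
  rw [Submodule.mem_bot]
  by_cases hl : l = 0
  · rw [hl, map_zero] at hxl; exact hxl.symm
  · obtain ⟨i₀, hi₀, _, hco⟩ := unitri_max_coord h1 h0 π l hl
    exfalso
    rw [hxl] at hco
    have hmem : i₀ ∈ S := (Finsupp.mem_supported F l).mp hlS hi₀
    have h00 : x (π i₀) = 0 := hx2 _ (hS _ hmem)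
    rw [h00] at hco
    exact (Finsupp.mem_support_iff.mp hi₀) hco.symm

/-- Existence of the normalized vector in a generic chamber. -/
lemma genVec_exists (C : TFlag F (m₀ + 2) (m₀ + 1)) (hC : Generic C) (k : Fin (m₀ + 1)) :
    ∃ v : Fin (m₀ + 2) → F, v ∈ C.1 k ∧
      v ⟨m₀ + 1 - (k : ℕ), by omega⟩ = 1 ∧
      ∀ i : Fin (m₀ + 2), m₀ + 1 - (k : ℕ) < (i : ℕ) → v i = 0 := by
  have hkm : (k : ℕ) ≤ m₀ := by omega
  set c : ℕ := m₀ + 1 - (k : ℕ) with hc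
  have hc2 : c + (k : ℕ) = m₀ + 1 := by omega
  -- the projection onto the last k+1 coordinates
  set φ : (Fin (m₀ + 2) → F) →ₗ[F] (Fin ((k : ℕ) + 1) → F) :=
    LinearMap.pi (fun t : Fin ((k : ℕ) + 1) => LinearMap.proj ⟨c + (t : ℕ), by omega⟩) with hφ
  set ψ : C.1 k →ₗ[F] (Fin ((k : ℕ) + 1) → F) := φ.comp (C.1 k).subtype with hψ
  have hker : LinearMap.ker ψ = ⊥ := by
    rw [LinearMap.ker_eq_bot']
    intro x hx
    have hxE : (x : Fin (m₀ + 2) → F) ∈ Emod F (m₀ + 2) c := by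
      intro i hi
      have ht : (i : ℕ) - c < (k : ℕ) + 1 := by omega
      have := congrFun hx ⟨(i : ℕ) - c, ht⟩
      simp only [hψ, hφ, LinearMap.comp_apply, LinearMap.pi_apply, LinearMap.proj_apply,
        Submodule.coe_subtype, Pi.zero_apply] at this
      have hieq : (⟨c + ((i : ℕ) - c), by omega⟩ : Fin (m₀ + 2)) = i :=
        Fin.ext (show c + ((i : ℕ) - c) = (i : ℕ) by omega)
      rwa [hieq] at this
    have hbot : (x : Fin (m₀ + 2) → F) ∈ C.1 k ⊓ Emod F (m₀ + 2) c := ⟨x.2, hxE⟩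
    rw [hC k] at hbot
    exact Subtype.ext hbot
  have hrange : LinearMap.range ψ = ⊤ := by
    apply Submodule.eq_top_of_finrank_eq
    have h1 := LinearMap.finrank_range_add_finrank_ker ψ
    rw [hker] at h1
    simp only [finrank_bot, add_zero] at h1
    rw [h1, flag_finrank C k]
    simp [Module.finrank_pi]
  obtain ⟨x, hxval⟩ := (LinearMap.range_eq_top.mp hrange) (Pi.single (0 : Fin ((k : ℕ) + 1)) 1)
  refine ⟨(x : Fin (m₀ + 2) → F), x.2, ?_, ?_⟩
  · have := congrFun hxval (0 : Fin ((k : ℕ) + 1))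
    simp only [hψ, hφ, LinearMap.comp_apply, LinearMap.pi_apply, LinearMap.proj_apply,
      Submodule.coe_subtype] at this
    rw [Pi.single_eq_same] at this
    have hieq : (⟨c + ((0 : Fin ((k : ℕ) + 1)) : ℕ), by omega⟩ : Fin (m₀ + 2))
        = ⟨c, by omega⟩ := Fin.ext (by simp)
    rwa [hieq] at this
  · intro i hi
    have ht : (i : ℕ) - c < (k : ℕ) + 1 := by omega
    have := congrFun hxval ⟨(i : ℕ) - c, ht⟩
    simp only [hψ, hφ, LinearMap.comp_apply, LinearMap.pi_apply, LinearMap.proj_apply,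
      Submodule.coe_subtype] at this
    have hieq : (⟨c + ((i : ℕ) - c), by omega⟩ : Fin (m₀ + 2)) = i :=
      Fin.ext (show c + ((i : ℕ) - c) = (i : ℕ) by omega)
    rw [hieq] at this
    rw [this, Pi.single_eq_of_ne (by rw [Fin.ne_iff_vne]; simp; omega) 1]
  
lemma genVec_unique (C : TFlag F (m₀ + 2) (m₀ + 1)) (hC : Generic C) (k : Fin (m₀ + 1))
    {v w : Fin (m₀ + 2) → F}
    (hv : v ∈ C.1 k ∧ v ⟨m₀ + 1 - (k : ℕ), by omega⟩ = 1 ∧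
      ∀ i : Fin (m₀ + 2), m₀ + 1 - (k : ℕ) < (i : ℕ) → v i = 0)
    (hw : w ∈ C.1 k ∧ w ⟨m₀ + 1 - (k : ℕ), by omega⟩ = 1 ∧
      ∀ i : Fin (m₀ + 2), m₀ + 1 - (k : ℕ) < (i : ℕ) → w i = 0) :
    v = w := by
  have hsub : v - w ∈ C.1 k ⊓ Emod F (m₀ + 2) (m₀ + 1 - (k : ℕ)) := by
    refine ⟨sub_mem hv.1 hw.1, ?_⟩
    intro i hi
    rcases eq_or_lt_of_le hi with hE | hE
    · have : i = ⟨m₀ + 1 - (k : ℕ), by omega⟩ := Fin.ext hE.symm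
      rw [this]
      simp [hv.2.1, hw.2.1]
    · simp [hv.2.2 i hE, hw.2.2 i hE]
  rw [hC k] at hsub
  exact sub_eq_zero.mp hsub

noncomputable def genVec (C : TFlag F (m₀ + 2) (m₀ + 1)) (hC : Generic C) (k : Fin (m₀ + 1)) :
    Fin (m₀ + 2) → F :=
  Classical.choose (genVec_exists C hC k)

lemma genVec_spec (C : TFlag F (m₀ + 2) (m₀ + 1)) (hC : Generic C) (k : Fin (m₀ + 1)) :
    genVec C hC k ∈ C.1 k ∧ genVec C hC k ⟨m₀ + 1 - (k : ℕ), by omega⟩ = 1 ∧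
      ∀ i : Fin (m₀ + 2), m₀ + 1 - (k : ℕ) < (i : ℕ) → genVec C hC k i = 0 :=
  Classical.choose_spec (genVec_exists C hC k)

/-- The unitriangular matrix extracted from a generic chamber. -/
noncomputable def matB (C : TFlag F (m₀ + 2) (m₀ + 1)) (hC : Generic C) :
    Matrix (Fin (m₀ + 2)) (Fin (m₀ + 2)) F :=
  fun i j =>
    if h : (j : ℕ) = 0 then (if i = j then 1 else 0)
    else genVec C hC ⟨m₀ + 1 - (j : ℕ), by omega⟩ i

lemma matB_unitri (C : TFlag F (m₀ + 2) (m₀ + 1)) (hC : Generic C) :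
    (∀ i, matB C hC i i = 1) ∧
      ∀ i j : Fin (m₀ + 2), (j : ℕ) < (i : ℕ) → matB C hC i j = 0 := by
  constructor
  · intro i
    rw [matB]
    split
    case isTrue h => rw [if_pos rfl]
    case isFalse h =>
      have hk : (⟨m₀ + 1 - (i : ℕ), by omega⟩ : Fin (m₀ + 1)) = ⟨m₀ + 1 - (i : ℕ), by omega⟩ := rfl
      have hs := (genVec_spec C hC ⟨m₀ + 1 - (i : ℕ), by omega⟩).2.1
      have hieq : (⟨m₀ + 1 - ((⟨m₀ + 1 - (i : ℕ), by omega⟩ : Fin (m₀ + 1)) : ℕ), by omega⟩ :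
          Fin (m₀ + 2)) = i := Fin.ext (by
            have := i.isLt
            show m₀ + 1 - (m₀ + 1 - (i : ℕ)) = (i : ℕ)
            omega)
      rwa [hieq] at hs
  · intro i j hij
    rw [matB]
    split
    case isTrue h =>
      exact if_neg (fun he => by rw [he] at hij; omega)
    case isFalse h =>
      apply (genVec_spec C hC ⟨m₀ + 1 - (j : ℕ), by omega⟩).2.2
      simp
      omega

end SolTits
namespace SolTits

open Module Submodule

variable {F : Type*} [Field F] {m₀ : ℕ}

section
variable {B : Matrix (Fin (m₀ + 2)) (Fin (m₀ + 2)) F}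

/-- The flag of a permuted column frame. -/
def Vflag (B : Matrix (Fin (m₀ + 2)) (Fin (m₀ + 2)) F) (π : Equiv.Perm (Fin (m₀ + 2)))
    (k : Fin (m₀ + 1)) : Submodule F (Fin (m₀ + 2) → F) :=
  Submodule.span F ((fun i : Fin (m₀ + 2) => fun r => B r (π i)) '' {i | (i : ℕ) ≤ (k : ℕ)})

lemma Vflag_valid (h1 : ∀ i, B i i = 1)
    (h0 : ∀ i j : Fin (m₀ + 2), (j : ℕ) < (i : ℕ) → B i j = 0) (π : Equiv.Perm (Fin (m₀ + 2))) :
    StrictMono (Vflag B π) ∧ ∀ k, Vflag B π k ≠ ⊥ ∧ Vflag B π k ≠ ⊤ := by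
  have hli : LinearIndependent F (fun i : Fin (m₀ + 2) => fun r => B r (π i)) :=
    (unitri_cols_li h1 h0).comp π π.injective
  constructor
  · intro k k' hkk'
    have hle : Vflag B π k ≤ Vflag B π k' :=
      Submodule.span_mono (Set.image_mono (fun s hs => by
        have hsk : (s : ℕ) ≤ (k : ℕ) := hs
        show (s : ℕ) ≤ (k' : ℕ)
        rw [Fin.lt_def] at hkk'
        omega))
    refine lt_of_le_of_ne hle ?_
    intro heq
    have hmem : (fun r => B r (π ⟨(k' : ℕ), by omega⟩)) ∈ Vflag B π k' :=
      Submodule.subset_span (Set.mem_image_of_mem _ (show ((k' : ℕ) : ℕ) ≤ (k' : ℕ) from le_refl _))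
    rw [← heq] at hmem
    refine hli.notMem_span_image ?_ hmem
    intro hmem2
    have h3 : (k' : ℕ) ≤ (k : ℕ) := hmem2
    rw [Fin.lt_def] at hkk'
    omega
  · intro k
    constructor
    · intro hbot
      have hmem : (fun r => B r (π ⟨(k : ℕ), by omega⟩)) ∈ Vflag B π k :=
        Submodule.subset_span (Set.mem_image_of_mem _ (show ((k : ℕ) : ℕ) ≤ (k : ℕ) from le_refl _))
      rw [hbot, Submodule.mem_bot] at hmem
      exact hli.ne_zero _ hmem
    · intro htop
      have hmem : (fun r => B r (π ⟨m₀ + 1, by omega⟩)) ∈ Vflag B π k := by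
        rw [htop]; trivial
      refine hli.notMem_span_image ?_ hmem
      intro hmem2
      have h3 : m₀ + 1 ≤ (k : ℕ) := hmem2
      omega

/-- The chamber of a permuted column frame of a unitriangular matrix. -/
def aflag (h1 : ∀ i, B i i = 1)
    (h0 : ∀ i j : Fin (m₀ + 2), (j : ℕ) < (i : ℕ) → B i j = 0)
    (π : Equiv.Perm (Fin (m₀ + 2))) : TFlag F (m₀ + 2) (m₀ + 1) :=
  ⟨Vflag B π, Vflag_valid h1 h0 π⟩

variable {R : Type*} [CommRing R]

lemma apartment_eq (h1 : ∀ i, B i i = 1)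
    (h0 : ∀ i j : Fin (m₀ + 2), (j : ℕ) < (i : ℕ) → B i j = 0) :
    apartment F R (m₀ + 2) B = ∑ π : Equiv.Perm (Fin (m₀ + 2)),
      ((Equiv.Perm.sign π : ℤ)) • Finsupp.single (aflag h1 h0 π) (1 : R) := by
  rw [apartment]
  apply Finset.sum_congr rfl
  intro π _
  congr 1
  rw [tchainOf]
  exact dif_pos (Vflag_valid h1 h0 π)

lemma tbdry_single (V : TFlag F (m₀ + 2) (m₀ + 1)) :
    tbdry F R (m₀ + 2) m₀ (Finsupp.single V (1 : R)) =
      ∑ i : Fin (m₀ + 1), ((-1 : R) ^ (i : ℕ)) • Finsupp.single (tface F V i) 1 := by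
  have hrw : tbdry F R (m₀ + 2) m₀ (Finsupp.single V (1 : R)) =
      (∑ i : Fin (m₀ + 1), ((-1 : R) ^ (i : ℕ)) • Finsupp.lsingle (R := R) (tface F V i)) 1 :=
    Finsupp.lsum_single _ _ _ _
  rw [hrw, LinearMap.sum_apply]
  apply Finset.sum_congr rfl
  intro i _
  rw [LinearMap.smul_apply, Finsupp.lsingle_apply]

lemma swap_image_Iic {i u : Fin (m₀ + 1)} (h : u ≠ i) :
    (fun s => Equiv.swap (Fin.castSucc i) (Fin.succ i) s) ''
      {s : Fin (m₀ + 2) | (s : ℕ) ≤ (u : ℕ)} = {s : Fin (m₀ + 2) | (s : ℕ) ≤ (u : ℕ)} := by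
  have huv : (u : ℕ) ≠ (i : ℕ) := fun hh => h (Fin.ext hh)
  have key : ∀ s : Fin (m₀ + 2), (s : ℕ) ≤ (u : ℕ) →
      ((Equiv.swap (Fin.castSucc i) (Fin.succ i) s : Fin (m₀ + 2)) : ℕ) ≤ (u : ℕ) := by
    intro s hs
    by_cases h1 : s = Fin.castSucc i
    · rw [h1, Equiv.swap_apply_left]
      rw [h1, Fin.coe_castSucc] at hs
      rw [Fin.val_succ]
      omega
    · by_cases h2 : s = Fin.succ i
      · rw [h2, Equiv.swap_apply_right, Fin.coe_castSucc]
        rw [h2, Fin.val_succ] at hs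
        omega
      · rw [Equiv.swap_apply_of_ne_of_ne h1 h2]
        exact hs
  ext s
  simp only [Set.mem_image, Set.mem_setOf_eq]
  constructor
  · rintro ⟨x, hx, rfl⟩
    exact key x hx
  · intro hs
    refine ⟨Equiv.swap (Fin.castSucc i) (Fin.succ i) s, key s hs, ?_⟩
    rw [Equiv.swap_apply_self]

lemma tface_aflag_swap (h1 : ∀ i, B i i = 1)
    (h0 : ∀ i j : Fin (m₀ + 2), (j : ℕ) < (i : ℕ) → B i j = 0)
    (π : Equiv.Perm (Fin (m₀ + 2))) (i : Fin (m₀ + 1)) :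
    tface F (aflag h1 h0 (π * Equiv.swap (Fin.castSucc i) (Fin.succ i))) i
      = tface F (aflag h1 h0 π) i := by
  apply Subtype.ext
  funext t
  show Vflag B (π * Equiv.swap (Fin.castSucc i) (Fin.succ i)) (i.succAbove t)
    = Vflag B π (i.succAbove t)
  rw [Vflag, Vflag]
  congr 1
  have hcomp : (fun s : Fin (m₀ + 2) =>
      (fun r => B r ((π * Equiv.swap (Fin.castSucc i) (Fin.succ i)) s))) =
      (fun s : Fin (m₀ + 2) => (fun r => B r (π s))) ∘
        (fun s => Equiv.swap (Fin.castSucc i) (Fin.succ i) s) := rfl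
  rw [hcomp, Set.image_comp]
  rw [swap_image_Iic (Fin.succAbove_ne i t)]

lemma tbdry_apartment (h1 : ∀ i, B i i = 1)
    (h0 : ∀ i j : Fin (m₀ + 2), (j : ℕ) < (i : ℕ) → B i j = 0) :
    tbdry F R (m₀ + 2) m₀ (apartment F R (m₀ + 2) B) = 0 := by
  rw [apartment_eq h1 h0]
  erw [map_sum]
  have hterm : ∀ π : Equiv.Perm (Fin (m₀ + 2)),
      tbdry F R (m₀ + 2) m₀ (((Equiv.Perm.sign π : ℤ)) • Finsupp.single (aflag h1 h0 π) (1 : R))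
      = ∑ i : Fin (m₀ + 1), ((Equiv.Perm.sign π : ℤ)) •
          (((-1 : R) ^ (i : ℕ)) • Finsupp.single (tface F (aflag h1 h0 π) i) 1) := by
    intro π
    erw [map_zsmul]
    rw [tbdry_single]
    exact Finset.smul_sum (M := ℤ) (N := TFlag F (m₀ + 2) m₀ →₀ R)
  rw [Finset.sum_congr rfl (fun π _ => hterm π)]
  erw [← Finset.sum_product']
  apply Finset.sum_involution
    (g := fun p _ => ((p.1 * Equiv.swap (Fin.castSucc p.2) (Fin.succ p.2), p.2) :
      Equiv.Perm (Fin (m₀ + 2)) × Fin (m₀ + 1)))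
  · rintro ⟨π, i⟩ _
    have hne : Fin.castSucc i ≠ Fin.succ i := (Fin.castSucc_lt_succ (i := i)).ne
    have hsign : Equiv.Perm.sign (π * Equiv.swap (Fin.castSucc i) (Fin.succ i))
        = - Equiv.Perm.sign π := by
      rw [Equiv.Perm.sign_mul, Equiv.Perm.sign_swap hne, mul_neg_one]
    show ((Equiv.Perm.sign π : ℤ)) • _ + ((Equiv.Perm.sign _ : ℤ)) • _ = 0
    rw [hsign, tface_aflag_swap h1 h0 π i]
    rw [Units.val_neg]
    erw [neg_smul]
    exact add_neg_cancel _
  · rintro ⟨π, i⟩ _ _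
    intro hcontra
    have : π * Equiv.swap (Fin.castSucc i) (Fin.succ i) = π := congrArg Prod.fst hcontra
    have h2 : Equiv.swap (Fin.castSucc i) (Fin.succ i) = 1 := by
      have := congrArg (fun σ => π⁻¹ * σ) this
      simpa [← mul_assoc] using this
    have hne : Fin.castSucc i ≠ Fin.succ i := (Fin.castSucc_lt_succ (i := i)).ne
    have h3 : Fin.succ i = Fin.castSucc i := by
      have := congrArg (fun σ : Equiv.Perm (Fin (m₀ + 2)) => σ (Fin.castSucc i)) h2
      simpa [Equiv.swap_apply_left] using this
    exact hne h3.symm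
  · rintro ⟨π, i⟩ _
    exact Finset.mem_product.mpr ⟨Finset.mem_univ _, Finset.mem_univ _⟩
  · rintro ⟨π, i⟩ _
    simp only [Prod.mk.injEq]
    constructor
    · rw [mul_assoc, Equiv.swap_mul_self, mul_one]
    · trivial

end

end SolTits
set_option maxHeartbeats 1000000

namespace SolTits

open Module Submodule

variable {F : Type*} [Field F] {m₀ : ℕ}

section
variable {B : Matrix (Fin (m₀ + 2)) (Fin (m₀ + 2)) F}

lemma generic_aflag_rev (h1 : ∀ i, B i i = 1)
    (h0 : ∀ i j : Fin (m₀ + 2), (j : ℕ) < (i : ℕ) → B i j = 0) :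
    Generic (aflag h1 h0 (Fin.revPerm : Equiv.Perm (Fin (m₀ + 2)))) := by
  intro t
  show Vflag B Fin.revPerm t ⊓ Emod F (m₀ + 2) (m₀ + 1 - (t : ℕ)) = ⊥
  rw [Vflag]
  apply span_inf_Emod h1 h0
  intro i hi
  have hi' : (i : ℕ) ≤ (t : ℕ) := hi
  show m₀ + 1 - (t : ℕ) ≤ ((Fin.revPerm i : Fin (m₀ + 2)) : ℕ)
  rw [Fin.revPerm_apply, Fin.val_rev]
  have := i.isLt
  have := t.isLt
  omega

lemma generic_imp_rev (h1 : ∀ i, B i i = 1)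
    (h0 : ∀ i j : Fin (m₀ + 2), (j : ℕ) < (i : ℕ) → B i j = 0)
    (π : Equiv.Perm (Fin (m₀ + 2))) (hg : Generic (aflag h1 h0 π)) :
    π = (Fin.revPerm : Equiv.Perm (Fin (m₀ + 2))) := by
  have key : ∀ n : ℕ, ∀ hn : n < m₀ + 1, ((π ⟨n, by omega⟩ : Fin (m₀ + 2)) : ℕ) = m₀ + 1 - n := by
    intro n
    induction n using Nat.strong_induction_on with
    | _ n IH =>
      intro hn
      by_contra hnee
      have hvlt := (π (⟨n, by omega⟩ : Fin (m₀ + 2))).isLt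
      have hlt : ((π ⟨n, by omega⟩ : Fin (m₀ + 2)) : ℕ) < m₀ + 1 - n := by
        rcases lt_or_gt_of_ne hnee with h | h
        · exact h
        · exfalso
          have hs : m₀ + 1 - ((π ⟨n, by omega⟩ : Fin (m₀ + 2)) : ℕ) < n := by omega
          have hIH := IH _ hs (by omega)
          have heq : π ⟨m₀ + 1 - ((π ⟨n, by omega⟩ : Fin (m₀ + 2)) : ℕ), by omega⟩
              = π ⟨n, by omega⟩ := Fin.ext (by rw [hIH]; omega)
          have := π.injective heq
          have hval : m₀ + 1 - ((π ⟨n, by omega⟩ : Fin (m₀ + 2)) : ℕ) = n :=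
            congrArg Fin.val this
          omega
      have hgen : Vflag B π ⟨n, hn⟩ ⊓ Emod F (m₀ + 2) (m₀ + 1 - n) = ⊥ := hg ⟨n, hn⟩
      have hmem1 : (fun r => B r (π ⟨n, by omega⟩)) ∈ Vflag B π ⟨n, hn⟩ :=
        Submodule.subset_span (Set.mem_image_of_mem _ (show n ≤ n from le_refl n))
      have hmem2 : (fun r => B r (π ⟨n, by omega⟩)) ∈ Emod F (m₀ + 2) (m₀ + 1 - n) := by
        intro i hi
        exact h0 i _ (by omega)
      have hbot : (fun r => B r (π ⟨n, by omega⟩)) ∈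
          Vflag B π ⟨n, hn⟩ ⊓ Emod F (m₀ + 2) (m₀ + 1 - n) := ⟨hmem1, hmem2⟩
      rw [hgen, Submodule.mem_bot] at hbot
      have hone := congrFun hbot (π ⟨n, by omega⟩)
      rw [h1] at hone
      exact one_ne_zero hone
  have hall : ∀ t : Fin (m₀ + 2), t ≠ Fin.last (m₀ + 1) → Fin.rev (π t) = t := by
    intro t ht
    have htv : (t : ℕ) < m₀ + 1 := by
      have := t.isLt
      rcases lt_or_eq_of_le (Nat.lt_succ_iff.mp this) with h | h
      · exact h
      · exact absurd (Fin.ext h : t = Fin.last (m₀ + 1)) ht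
    have hk := key (t : ℕ) htv
    have hteta : (⟨(t : ℕ), by omega⟩ : Fin (m₀ + 2)) = t := Fin.ext rfl
    rw [hteta] at hk
    apply Fin.ext
    rw [Fin.val_rev]
    omega
  apply Equiv.ext
  intro t
  have hrevt : Fin.rev (π t) = t := by
    by_cases ht : t = Fin.last (m₀ + 1)
    · rw [ht]
      by_contra hne
      have h2 := hall _ hne
      have h3 := π.injective (Fin.rev_injective h2)
      exact hne h3
    · exact hall t ht
  have : π t = Fin.rev t := by
    calc π t = Fin.rev (Fin.rev (π t)) := (Fin.rev_rev _).symm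
    _ = Fin.rev t := by rw [hrevt]
  rw [this, Fin.revPerm_apply]

lemma matB_aflag_rev (h1 : ∀ i, B i i = 1)
    (h0 : ∀ i j : Fin (m₀ + 2), (j : ℕ) < (i : ℕ) → B i j = 0)
    (hg : Generic (aflag h1 h0 (Fin.revPerm : Equiv.Perm (Fin (m₀ + 2))))) :
    matB (aflag h1 h0 (Fin.revPerm : Equiv.Perm (Fin (m₀ + 2)))) hg = B := by
  funext i j
  rw [matB]
  split
  case isTrue hj =>
    split
    case isTrue hij => rw [hij, h1]
    case isFalse hij =>
      refine (h0 i j ?_).symm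
      have : (i : ℕ) ≠ (j : ℕ) := fun hh => hij (Fin.ext hh)
      omega
  case isFalse hj =>
    have hjlt := j.isLt
    have huniq := genVec_unique _ hg ⟨m₀ + 1 - (j : ℕ), by omega⟩
      (genVec_spec _ hg ⟨m₀ + 1 - (j : ℕ), by omega⟩)
      (w := fun r => B r j) ⟨?_, ?_, ?_⟩
    · exact congrFun huniq i
    · -- membership in the span
      show (fun r => B r j) ∈
        Vflag B (Fin.revPerm : Equiv.Perm (Fin (m₀ + 2))) ⟨m₀ + 1 - (j : ℕ), by omega⟩
      have hrev : (Fin.revPerm : Equiv.Perm (Fin (m₀ + 2)))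
          (⟨m₀ + 1 - (j : ℕ), by omega⟩ : Fin (m₀ + 2)) = j := by
        rw [Fin.revPerm_apply]
        apply Fin.ext
        rw [Fin.val_rev]
        show m₀ + 2 - (m₀ + 1 - (j : ℕ) + 1) = (j : ℕ)
        omega
      refine Submodule.subset_span
        ⟨(⟨m₀ + 1 - (j : ℕ), by omega⟩ : Fin (m₀ + 2)),
          show m₀ + 1 - (j : ℕ) ≤ m₀ + 1 - (j : ℕ) from le_refl _, ?_⟩
      show (fun r => B r (Fin.revPerm (⟨m₀ + 1 - (j : ℕ), by omega⟩ : Fin (m₀ + 2))))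
        = fun r => B r j
      funext r
      rw [hrev]
    · -- normalization
      show B ⟨m₀ + 1 - ((⟨m₀ + 1 - (j : ℕ), by omega⟩ : Fin (m₀ + 1)) : ℕ), by omega⟩ j = 1
      have hieq : (⟨m₀ + 1 - ((⟨m₀ + 1 - (j : ℕ), by omega⟩ : Fin (m₀ + 1)) : ℕ), by omega⟩ :
          Fin (m₀ + 2)) = j := Fin.ext (show m₀ + 1 - (m₀ + 1 - (j : ℕ)) = (j : ℕ) by omega)
      rw [hieq]
      exact h1 j
    · intro i' hi'
      refine h0 i' j ?_
      have : m₀ + 1 - (m₀ + 1 - (j : ℕ)) < (i' : ℕ) := hi'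
      omega

lemma aflag_matB (C : TFlag F (m₀ + 2) (m₀ + 1)) (hC : Generic C) :
    aflag (matB_unitri C hC).1 (matB_unitri C hC).2
      (Fin.revPerm : Equiv.Perm (Fin (m₀ + 2))) = C := by
  apply Subtype.ext
  funext t
  show Vflag (matB C hC) Fin.revPerm t = C.1 t
  have hle : Vflag (matB C hC) Fin.revPerm t ≤ C.1 t := by
    rw [Vflag, Submodule.span_le]
    rintro x ⟨i, hi, rfl⟩
    have hi' : (i : ℕ) ≤ (t : ℕ) := hi
    have hit := i.isLt
    have htt := t.isLt
    have hjv : ((Fin.revPerm i : Fin (m₀ + 2)) : ℕ) = m₀ + 1 - (i : ℕ) := by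
      rw [Fin.revPerm_apply, Fin.val_rev]
      omega
    have hj0 : ¬ ((Fin.revPerm i : Fin (m₀ + 2)) : ℕ) = 0 := by omega
    have hcol : (fun r => matB C hC r (Fin.revPerm i))
        = genVec C hC ⟨m₀ + 1 - ((Fin.revPerm i : Fin (m₀ + 2)) : ℕ), by omega⟩ := by
      funext r
      rw [matB, dif_neg hj0]
    show (fun r => matB C hC r (Fin.revPerm i)) ∈ (C.1 t : Set (Fin (m₀ + 2) → F))
    rw [hcol]
    have hk₁le : (⟨m₀ + 1 - ((Fin.revPerm i : Fin (m₀ + 2)) : ℕ), by omega⟩ : Fin (m₀ + 1)) ≤ t := by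
      rw [Fin.le_def]
      show m₀ + 1 - ((Fin.revPerm i : Fin (m₀ + 2)) : ℕ) ≤ (t : ℕ)
      omega
    exact C.2.1.monotone hk₁le (genVec_spec C hC _).1
  have h1 : finrank F (Vflag (matB C hC) Fin.revPerm t) = (t : ℕ) + 1 :=
    flag_finrank (aflag (matB_unitri C hC).1 (matB_unitri C hC).2
      (Fin.revPerm : Equiv.Perm (Fin (m₀ + 2)))) t
  exact Submodule.eq_of_le_of_finrank_le hle (by rw [flag_finrank C t, h1])

end

end SolTits
namespace SolTits

open Module Submodule

variable (F : Type*) [Field F] (R : Type*) [CommRing R] (m₀ : ℕ)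

/-- The type of upper unitriangular matrices. -/
abbrev Uni := {B : Matrix (Fin (m₀ + 2)) (Fin (m₀ + 2)) F //
  (∀ i, B i i = 1) ∧ ∀ i j : Fin (m₀ + 2), (j : ℕ) < (i : ℕ) → B i j = 0}

/-- The sign of the longest permutation, as an element of `R`. -/
noncomputable def eps : R :=
  ((Equiv.Perm.sign (Fin.revPerm : Equiv.Perm (Fin (m₀ + 2))) : ℤ) : R)

lemma eps_mul_eps : eps R m₀ * eps R m₀ = 1 := by
  have h2 : ((Equiv.Perm.sign (Fin.revPerm : Equiv.Perm (Fin (m₀ + 2)))) : ℤ) *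
      ((Equiv.Perm.sign (Fin.revPerm : Equiv.Perm (Fin (m₀ + 2)))) : ℤ) = 1 := by
    rw [← Units.val_mul, Int.units_mul_self, Units.val_one]
  rw [eps, ← Int.cast_mul, h2, Int.cast_one]

lemma isUnit_eps : IsUnit (eps R m₀) := IsUnit.of_mul_eq_one _ (eps_mul_eps R m₀)

/-- The map sending a unitriangular matrix to its apartment class. -/
noncomputable def PsiMap : (Uni F m₀ →₀ R) →ₗ[R] (TFlag F (m₀ + 2) (m₀ + 1) →₀ R) :=
  Finsupp.lsum R fun B => LinearMap.toSpanSingleton R _ (apartment F R (m₀ + 2) B.1)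

/-- The map extracting generic coefficients. -/
noncomputable def PhiMap : (TFlag F (m₀ + 2) (m₀ + 1) →₀ R) →ₗ[R] (Uni F m₀ →₀ R) :=
  Finsupp.lsum R fun C => LinearMap.toSpanSingleton R _
    (if h : Generic C then
      Finsupp.single (⟨matB C h, matB_unitri C h⟩ : Uni F m₀) (eps R m₀) else 0)

variable {F R m₀}

lemma PsiMap_single (B : Uni F m₀) (r : R) :
    PsiMap F R m₀ (Finsupp.single B r) = r • apartment F R (m₀ + 2) B.1 := by
  have h1 : PsiMap F R m₀ (Finsupp.single B r)
      = LinearMap.toSpanSingleton R _ (apartment F R (m₀ + 2) B.1) r :=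
    Finsupp.lsum_single _ _ _ _
  rw [h1, LinearMap.toSpanSingleton_apply]

lemma PhiMap_single (C : TFlag F (m₀ + 2) (m₀ + 1)) (r : R) :
    PhiMap F R m₀ (Finsupp.single C r) = r •
      (if h : Generic C then
        Finsupp.single (⟨matB C h, matB_unitri C h⟩ : Uni F m₀) (eps R m₀) else 0) := by
  have h1 : PhiMap F R m₀ (Finsupp.single C r)
      = LinearMap.toSpanSingleton R _ (if h : Generic C then
        Finsupp.single (⟨matB C h, matB_unitri C h⟩ : Uni F m₀) (eps R m₀) else 0) r :=
    Finsupp.lsum_single _ _ _ _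
  rw [h1, LinearMap.toSpanSingleton_apply]

lemma aflag_congr {B B' : Matrix (Fin (m₀ + 2)) (Fin (m₀ + 2)) F} (h : B = B')
    (h1 : ∀ i, B i i = 1) (h0 : ∀ i j : Fin (m₀ + 2), (j : ℕ) < (i : ℕ) → B i j = 0)
    (h1' : ∀ i, B' i i = 1) (h0' : ∀ i j : Fin (m₀ + 2), (j : ℕ) < (i : ℕ) → B' i j = 0)
    (π : Equiv.Perm (Fin (m₀ + 2))) : aflag h1 h0 π = aflag h1' h0' π := by
  subst h
  rfl

lemma PhiMap_apartment (B : Uni F m₀) :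
    PhiMap F R m₀ (apartment F R (m₀ + 2) B.1) = Finsupp.single B 1 := by
  rw [apartment_eq B.2.1 B.2.2 (R := R), map_sum]
  rw [Finset.sum_eq_single (Fin.revPerm : Equiv.Perm (Fin (m₀ + 2)))]
  · rw [map_zsmul, PhiMap_single, one_smul, dif_pos (generic_aflag_rev B.2.1 B.2.2)]
    have hBB : (⟨matB (aflag B.2.1 B.2.2 (Fin.revPerm : Equiv.Perm (Fin (m₀ + 2))))
          (generic_aflag_rev B.2.1 B.2.2),
        matB_unitri _ (generic_aflag_rev B.2.1 B.2.2)⟩ : Uni F m₀) = B :=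
      Subtype.ext (matB_aflag_rev B.2.1 B.2.2 _)
    rw [hBB, Finsupp.smul_single]
    congr 1
    rw [zsmul_eq_mul]
    exact eps_mul_eps R m₀
  · intro π _ hπ
    rw [map_zsmul, PhiMap_single, one_smul,
      dif_neg (fun h => hπ (generic_imp_rev B.2.1 B.2.2 π h)), smul_zero]
  · intro h
    exact absurd (Finset.mem_univ _) h

lemma PhiMap_apply (z : TFlag F (m₀ + 2) (m₀ + 1) →₀ R) (b : Uni F m₀) :
    PhiMap F R m₀ z b = z.sum fun C r => r •
      ((if h : Generic C then
        Finsupp.single (⟨matB C h, matB_unitri C h⟩ : Uni F m₀) (eps R m₀) else 0) b) := by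
  have hrw : PhiMap F R m₀ z = z.sum fun C r => (LinearMap.toSpanSingleton R _
      (if h : Generic C then
        Finsupp.single (⟨matB C h, matB_unitri C h⟩ : Uni F m₀) (eps R m₀) else 0)) r :=
    Finsupp.lsum_apply _ _ z
  rw [hrw, Finsupp.sum_apply]
  apply Finsupp.sum_congr
  intro C _
  rw [LinearMap.toSpanSingleton_apply, Finsupp.smul_apply]

lemma generic_coeff_eq_zero (z : TFlag F (m₀ + 2) (m₀ + 1) →₀ R)
    (hz : PhiMap F R m₀ z = 0) (C : TFlag F (m₀ + 2) (m₀ + 1)) (hC : Generic C) :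
    z C = 0 := by
  by_cases hsupp : C ∈ z.support
  swap
  · exact Finsupp.notMem_support_iff.mp hsupp
  have h0 : PhiMap F R m₀ z (⟨matB C hC, matB_unitri C hC⟩ : Uni F m₀) = 0 := by
    rw [hz]; rfl
  rw [PhiMap_apply, Finsupp.sum] at h0
  rw [Finset.sum_eq_single_of_mem C hsupp] at h0
  · rw [dif_pos hC, Finsupp.single_apply, if_pos rfl, smul_eq_mul] at h0
    exact ((isUnit_eps R m₀).mul_left_eq_zero).mp h0
  · intro C' hC's hne
    by_cases hg' : Generic C'
    · rw [dif_pos hg', Finsupp.single_apply, if_neg, smul_zero]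
      intro he
      apply hne
      have hBB : matB C' hg' = matB C hC := congrArg Subtype.val he
      calc C' = aflag (matB_unitri C' hg').1 (matB_unitri C' hg').2
            (Fin.revPerm : Equiv.Perm (Fin (m₀ + 2))) := (aflag_matB C' hg').symm
        _ = aflag (matB_unitri C hC).1 (matB_unitri C hC).2
            (Fin.revPerm : Equiv.Perm (Fin (m₀ + 2))) := aflag_congr hBB _ _ _ _ _
        _ = C := aflag_matB C hC
    · rw [dif_neg hg', Finsupp.coe_zero, Pi.zero_apply, smul_zero]

variable (F R m₀) in
lemma tbdry_PsiMap : ∀ l : Uni F m₀ →₀ R, tbdry F R (m₀ + 2) m₀ (PsiMap F R m₀ l) = 0 := by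
  have hcomp : (tbdry F R (m₀ + 2) m₀).comp (PsiMap F R m₀) = 0 := by
    apply Finsupp.lhom_ext
    intro B r
    show tbdry F R (m₀ + 2) m₀ (PsiMap F R m₀ (Finsupp.single B r)) = 0
    rw [PsiMap_single, map_smul, tbdry_apartment B.2.1 B.2.2, smul_zero]
  intro l
  exact LinearMap.congr_fun hcomp l

variable (F R m₀) in
lemma PhiMap_PsiMap : ∀ l : Uni F m₀ →₀ R, PhiMap F R m₀ (PsiMap F R m₀ l) = l := by
  have hcomp : (PhiMap F R m₀).comp (PsiMap F R m₀) = LinearMap.id := by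
    apply Finsupp.lhom_ext
    intro B r
    show PhiMap F R m₀ (PsiMap F R m₀ (Finsupp.single B r)) = Finsupp.single B r
    rw [PsiMap_single]
    erw [map_smul]
    rw [PhiMap_apartment, Finsupp.smul_single, smul_eq_mul, mul_one]
  intro l
  exact LinearMap.congr_fun hcomp l

variable (F R m₀) in
noncomputable def PsiK : (Uni F m₀ →₀ R) →ₗ[R] (LinearMap.ker (tbdry F R (m₀ + 2) m₀)) :=
  LinearMap.codRestrict _ (PsiMap F R m₀)
    (fun l => LinearMap.mem_ker.mpr (tbdry_PsiMap F R m₀ l))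

variable (F R m₀) in
noncomputable def PhiK : (LinearMap.ker (tbdry F R (m₀ + 2) m₀)) →ₗ[R] (Uni F m₀ →₀ R) :=
  (PhiMap F R m₀).comp (LinearMap.ker (tbdry F R (m₀ + 2) m₀)).subtype

variable (F R m₀) in
lemma PhiK_PsiK : (PhiK F R m₀).comp (PsiK F R m₀) = LinearMap.id :=
  LinearMap.ext fun l => PhiMap_PsiMap F R m₀ l

variable (F R m₀) in
lemma PsiK_PhiK : (PsiK F R m₀).comp (PhiK F R m₀) = LinearMap.id := by
  apply LinearMap.ext
  intro z
  apply Subtype.ext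
  show PsiMap F R m₀ (PhiMap F R m₀ z.1) = z.1
  obtain ⟨v, hv⟩ : ∃ v : TFlag F (m₀ + 2) (m₀ + 1) →₀ R, v = z.1 := ⟨z.1, rfl⟩
  rw [← hv]
  have hzker : tbdry F R (m₀ + 2) m₀ v = 0 := by
    rw [hv]; exact LinearMap.mem_ker.mp z.2
  have hw1 : tbdry F R (m₀ + 2) m₀ (v - PsiMap F R m₀ (PhiMap F R m₀ v)) = 0 := by
    erw [map_sub]
    rw [hzker, tbdry_PsiMap, sub_zero]
  have hw2 : PhiMap F R m₀ (v - PsiMap F R m₀ (PhiMap F R m₀ v)) = 0 := by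
    rw [map_sub, PhiMap_PsiMap, sub_self]
  have hw3 : v - PsiMap F R m₀ (PhiMap F R m₀ v) = 0 :=
    cycle_eq_zero _ hw1 (generic_coeff_eq_zero _ hw2)
  exact (sub_eq_zero.mp hw3).symm

end SolTits

open SolTits in
/-- **Solomon–Tits.**  The Steinberg module `St_{GL_n}(F;R)`, i.e. the top-degree
reduced cycles of the `(n-2)`-dimensional Tits building of `GL_n(F)`, is a free
`R`-module with basis the apartment classes of upper unitriangular matrices.
Here `n = m₀ + 2 ≥ 2`. -/
theorem solomonTits_unitriangular_basis (F : Type*) [Field F] (R : Type*) [CommRing R]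
    (m₀ : ℕ) :
    ∃ b : Module.Basis {B : Matrix (Fin (m₀ + 2)) (Fin (m₀ + 2)) F //
        (∀ i, B i i = 1) ∧ ∀ i j : Fin (m₀ + 2), (j : ℕ) < (i : ℕ) → B i j = 0}
        R (LinearMap.ker (tbdry F R (m₀ + 2) m₀)),
      ∀ B, (b B : TCh F R (m₀ + 2) (m₀ + 1)) = apartment F R (m₀ + 2) B.1 := by
  classical
  refine ⟨Module.Basis.ofRepr (LinearEquiv.ofLinear (PhiK F R m₀) (PsiK F R m₀)
    (PhiK_PsiK F R m₀) (PsiK_PhiK F R m₀)), ?_⟩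
  intro B
  show PsiMap F R m₀ (Finsupp.single B 1) = apartment F R (m₀ + 2) B.1
  rw [PsiMap_single, one_smul]
end
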